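/- arXiv:2503.06379 — 5 statements merged into one kernel-verified Lean document; each statement's English description precedes it below -/
import Mathlib

section
/- Let G be a finite group and p a prime, and suppose G is not a p-group. Then the Euler characteristic of the coset poset C_p(G) satisfies χ(C_p(G)) = -Σ_{H ∈ S_p(G) ∪ {1}} μ(H,G)·[G:H], where μ is the Möbius function of the finite poset S_p(G) ∪ {1, G} ordered by inclusion. -/
open scoped Classical in
/-- The Euler characteristic of (the order complex of) a finite poset `P`:
`χ(P) = Σ_{i ≥ 0} (-1)^i c_i` where `c_i` is the number of chains in `P` with
exactly `i + 1` elements; a chain with `i + 1` elements contributes `(-1)^i = (-1)^(card+1)`. -/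
noncomputable def posetEulerChar (P : Type*) [PartialOrder P] [Finite P] : ℤ :=
  letI := Fintype.ofFinite P
  ∑ s ∈ (Finset.univ : Finset P).powerset,
    if s.Nonempty ∧ IsChain (· ≤ ·) (s : Set P) then (-1 : ℤ) ^ (s.card + 1) else 0

/-- `μ` is the Möbius function of the poset `P`: `μ(x,x) = 1` and
`Σ_{x ≤ z ≤ y} μ(x,z) = 0` for all `x < y`. -/
def IsMobiusOf {P : Type*} [PartialOrder P] (μ : P → P → ℤ) : Prop :=
  (∀ x, μ x x = 1) ∧ ∀ x y : P, x < y → (∑ᶠ z ∈ Set.Icc x y, μ x z) = 0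

/-- The coset poset `C_p(G)`: all right cosets `Hx` (as subsets of `G`, ordered by
inclusion) where `H` ranges over the `p`-subgroups of `G` (including the trivial one). -/
def pCosets (p : ℕ) (G : Type*) [Group G] : Set (Set G) :=
  {S | ∃ (H : Subgroup G) (x : G), IsPGroup p H ∧ S = (fun h => h * x) '' (H : Set G)}



open Finset
open scoped Classical

section PosetLemmas

variable {P : Type*} [PartialOrder P] [Fintype P]

/-- Chains from `x` to `y` inside `[x,y]`. -/
noncomputable def chainsTo (x y : P) : Finset (Finset P) :=
  univ.filter fun s => IsChain (· ≤ ·) (s : Set P) ∧ x ∈ s ∧ y ∈ s ∧ ∀ z ∈ s, x ≤ z ∧ z ≤ y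

lemma mem_chainsTo {x y : P} {s : Finset P} :
    s ∈ chainsTo x y ↔
      IsChain (· ≤ ·) (s : Set P) ∧ x ∈ s ∧ y ∈ s ∧ ∀ z ∈ s, x ≤ z ∧ z ≤ y := by
  simp [chainsTo]

/-- Philip Hall's expression as a candidate Möbius function. -/
noncomputable def hallMu (x y : P) : ℤ := ∑ s ∈ chainsTo x y, (-1 : ℤ) ^ (s.card + 1)

lemma chain_exists_least {s : Finset P} (hc : IsChain (· ≤ ·) (s : Set P)) (hne : s.Nonempty) :
    ∃ b ∈ s, ∀ z ∈ s, b ≤ z := by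
  obtain ⟨m, hm, hmin⟩ := s.exists_minimal hne
  refine ⟨m, hm, fun z hz => ?_⟩
  rcases eq_or_ne m z with rfl | hne'
  · exact le_rfl
  · rcases hc hm hz hne' with h | h
    · exact h
    · exact hmin hz h

lemma chain_exists_greatest {s : Finset P} (hc : IsChain (· ≤ ·) (s : Set P)) (hne : s.Nonempty) :
    ∃ b ∈ s, ∀ z ∈ s, z ≤ b := by
  obtain ⟨m, hm, hmax⟩ := s.exists_maximal hne
  refine ⟨m, hm, fun z hz => ?_⟩
  rcases eq_or_ne m z with rfl | hne'
  · exact le_rfl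
  · rcases hc hm hz hne' with h | h
    · exact hmax hz h
    · exact h

variable [Nonempty P]

/-- The least element of a (nonempty) chain. -/
noncomputable def chainBot (s : Finset P) : P :=
  if h : ∃ b ∈ s, ∀ z ∈ s, b ≤ z then h.choose else Classical.arbitrary P

/-- The greatest element of a (nonempty) chain. -/
noncomputable def chainTop (s : Finset P) : P :=
  if h : ∃ b ∈ s, ∀ z ∈ s, z ≤ b then h.choose else Classical.arbitrary P

lemma chainBot_eq {s : Finset P} {b : P} (hb : b ∈ s) (hleast : ∀ z ∈ s, b ≤ z) :
    chainBot s = b := by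
  have h : ∃ b ∈ s, ∀ z ∈ s, b ≤ z := ⟨b, hb, hleast⟩
  rw [chainBot, dif_pos h]
  obtain ⟨hm, hl⟩ := h.choose_spec
  exact le_antisymm (hl b hb) (hleast _ hm)

lemma chainTop_eq {s : Finset P} {b : P} (hb : b ∈ s) (hgr : ∀ z ∈ s, z ≤ b) :
    chainTop s = b := by
  have h : ∃ b ∈ s, ∀ z ∈ s, z ≤ b := ⟨b, hb, hgr⟩
  rw [chainTop, dif_pos h]
  obtain ⟨hm, hl⟩ := h.choose_spec
  exact le_antisymm (hgr _ hm) (hl b hb)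

lemma chainBot_spec {s : Finset P} (hc : IsChain (· ≤ ·) (s : Set P)) (hne : s.Nonempty) :
    chainBot s ∈ s ∧ ∀ z ∈ s, chainBot s ≤ z := by
  obtain ⟨b, hb, hl⟩ := chain_exists_least hc hne
  rw [chainBot_eq hb hl]; exact ⟨hb, hl⟩

lemma chainTop_spec {s : Finset P} (hc : IsChain (· ≤ ·) (s : Set P)) (hne : s.Nonempty) :
    chainTop s ∈ s ∧ ∀ z ∈ s, z ≤ chainTop s := by
  obtain ⟨b, hb, hl⟩ := chain_exists_greatest hc hne
  rw [chainTop_eq hb hl]; exact ⟨hb, hl⟩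

/-- The closed interval as a Finset. -/
noncomputable def Ficc (x y : P) : Finset P := univ.filter fun z => x ≤ z ∧ z ≤ y

lemma coe_Ficc (x y : P) : (Ficc x y : Set P) = Set.Icc x y := by
  ext z; simp [Ficc, Set.mem_Icc]

lemma mem_Ficc {x y z : P} : z ∈ Ficc x y ↔ x ≤ z ∧ z ≤ y := by simp [Ficc]

lemma chainsTo_self (x : P) : chainsTo x x = {{x}} := by
  ext s
  simp only [mem_chainsTo, Finset.mem_singleton]
  constructor
  · rintro ⟨_, hx, -, hb⟩
    apply Finset.eq_singleton_iff_unique_mem.mpr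
    exact ⟨hx, fun z hz => le_antisymm (hb z hz).2 (hb z hz).1⟩
  · rintro rfl
    refine ⟨by simp [Set.Subsingleton.isChain, Set.subsingleton_singleton], by simp, by simp, ?_⟩
    simp

lemma hallMu_self (x : P) : hallMu x x = 1 := by
  simp [hallMu, chainsTo_self]

/-- Chains in `[x,y]` containing `x`. -/
noncomputable def chainsFrom (x y : P) : Finset (Finset P) :=
  univ.filter fun s => IsChain (· ≤ ·) (s : Set P) ∧ x ∈ s ∧ ∀ z ∈ s, x ≤ z ∧ z ≤ y

lemma mem_chainsFrom {x y : P} {s : Finset P} :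
    s ∈ chainsFrom x y ↔
      IsChain (· ≤ ·) (s : Set P) ∧ x ∈ s ∧ ∀ z ∈ s, x ≤ z ∧ z ≤ y := by
  simp [chainsFrom]

lemma sum_chainsFrom_zero {x y : P} (hxy : x < y) :
    ∑ s ∈ chainsFrom x y, (-1 : ℤ) ^ (s.card + 1) = 0 := by
  refine Finset.sum_involution
    (fun s _ => if y ∈ s then s.erase y else insert y s) ?_ ?_ ?_ ?_
  · intro s hs
    rw [mem_chainsFrom] at hs
    obtain ⟨hc, hx, hb⟩ := hs
    by_cases hy : y ∈ s
    · simp only [if_pos hy, Finset.card_erase_of_mem hy]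
      have h1 : 1 ≤ s.card := Finset.card_pos.mpr ⟨x, hx⟩
      obtain ⟨c, hc'⟩ : ∃ c, s.card = c + 1 := ⟨s.card - 1, (Nat.succ_pred_eq_of_pos h1).symm⟩
      rw [hc']
      simp [pow_succ]
    · simp only [if_neg hy, Finset.card_insert_of_notMem hy]
      simp [pow_succ]
  · intro s hs h
    by_cases hy : y ∈ s
    · simp only [if_pos hy]
      intro he
      exact (Finset.notMem_erase y s) (he.symm ▸ hy)
    · simp only [if_neg hy]
      intro he
      exact hy (he ▸ Finset.mem_insert_self y s)
  · intro s hs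
    rw [mem_chainsFrom] at hs
    obtain ⟨hc, hx, hb⟩ := hs
    by_cases hy : y ∈ s
    · simp only [if_pos hy]
      rw [mem_chainsFrom]
      refine ⟨hc.mono ?_, ?_, ?_⟩
      · exact_mod_cast Finset.coe_subset.mpr (Finset.erase_subset y s)
      · exact Finset.mem_erase.mpr ⟨hxy.ne, hx⟩
      · exact fun z hz => hb z (Finset.erase_subset y s hz)
    · simp only [if_neg hy]
      rw [mem_chainsFrom]
      constructor
      · rw [Finset.coe_insert]
        refine hc.insert fun b hb' hne => ?_
        exact Or.inr (hb b hb').2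
      constructor
      · exact Finset.mem_insert_of_mem hx
      · intro z hz
        rcases Finset.mem_insert.mp hz with rfl | hz'
        · exact ⟨hxy.le, le_rfl⟩
        · exact hb z hz'
  · intro s hs
    by_cases hy : y ∈ s
    · simp [if_pos hy, Finset.notMem_erase, Finset.insert_erase hy]
    · simp [if_neg hy, Finset.mem_insert_self, Finset.erase_insert hy]

lemma sum_hallMu_Icc {x y : P} (hxy : x < y) :
    ∑ z ∈ Ficc x y, hallMu x z = 0 := by
  have hmaps : ∀ s ∈ chainsFrom x y, chainTop s ∈ Ficc x y := by
    intro s hs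
    rw [mem_chainsFrom] at hs
    obtain ⟨hc, hx, hb⟩ := hs
    have := chainTop_spec hc ⟨x, hx⟩
    exact mem_Ficc.mpr (hb _ this.1)
  have key := Finset.sum_fiberwise_of_maps_to hmaps (fun s => (-1 : ℤ) ^ (s.card + 1))
  have fib : ∀ z ∈ Ficc x y,
      (chainsFrom x y).filter (fun s => chainTop s = z) = chainsTo x z := by
    intro z hz
    rw [mem_Ficc] at hz
    ext s
    rw [Finset.mem_filter, mem_chainsFrom, mem_chainsTo]
    constructor
    · rintro ⟨⟨hc, hx, hb⟩, htop⟩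
      have hspec := chainTop_spec hc ⟨x, hx⟩
      refine ⟨hc, hx, htop ▸ hspec.1, fun w hw => ⟨(hb w hw).1, htop ▸ hspec.2 w hw⟩⟩
    · rintro ⟨hc, hx, hzs, hb⟩
      refine ⟨⟨hc, hx, fun w hw => ⟨(hb w hw).1, (hb w hw).2.trans hz.2⟩⟩, ?_⟩
      exact chainTop_eq hzs fun w hw => (hb w hw).2
  calc ∑ z ∈ Ficc x y, hallMu x z
      = ∑ z ∈ Ficc x y, ∑ s ∈ (chainsFrom x y).filter (fun s => chainTop s = z),
          (-1 : ℤ) ^ (s.card + 1) := by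
        refine Finset.sum_congr rfl fun z hz => ?_
        rw [hallMu, fib z hz]
    _ = ∑ s ∈ chainsFrom x y, (-1 : ℤ) ^ (s.card + 1) := key
    _ = 0 := sum_chainsFrom_zero hxy

/-- Uniqueness: any Möbius function agrees with Hall's formula on comparable pairs. -/
lemma IsMobiusOf_eq_hallMu' (μ : P → P → ℤ)
    (h1 : ∀ x, μ x x = 1)
    (h2 : ∀ x y : P, x < y → ∑ z ∈ Ficc x y, μ x z = 0) :
    ∀ x y : P, x ≤ y → μ x y = hallMu x y := by
  have key : ∀ n (x y : P), (Ficc x y).card ≤ n → x ≤ y → μ x y = hallMu x y := by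
    intro n
    induction n with
    | zero =>
      intro x y hcard hxy
      exfalso
      have : x ∈ Ficc x y := mem_Ficc.mpr ⟨le_rfl, hxy⟩
      have := Finset.card_pos.mpr ⟨x, this⟩
      omega
    | succ n ih =>
      intro x y hcard hxy
      rcases eq_or_lt_of_le hxy with rfl | hlt
      · rw [h1, hallMu_self]
      · have hy : y ∈ Ficc x y := mem_Ficc.mpr ⟨hxy, le_rfl⟩
        have e1 : μ x y + ∑ z ∈ (Ficc x y).erase y, μ x z = 0 := by
          rw [Finset.add_sum_erase _ _ hy]; exact h2 x y hlt
        have e2 : hallMu x y + ∑ z ∈ (Ficc x y).erase y, hallMu x z = 0 := by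
          rw [Finset.add_sum_erase _ _ hy]; exact sum_hallMu_Icc hlt
        have congrsum : ∑ z ∈ (Ficc x y).erase y, μ x z
            = ∑ z ∈ (Ficc x y).erase y, hallMu x z := by
          refine Finset.sum_congr rfl fun z hz => ?_
          obtain ⟨hzy, hz'⟩ := Finset.mem_erase.mp hz
          rw [mem_Ficc] at hz'
          refine ih x z ?_ hz'.1
          have hss : Ficc x z ⊂ Ficc x y := by
            refine Finset.ssubset_iff_of_subset ?_ |>.mpr ⟨y, hy, ?_⟩
            · intro w hw
              rw [mem_Ficc] at hw ⊢
              exact ⟨hw.1, hw.2.trans hz'.2⟩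
            · intro hmem
              exact hzy (le_antisymm hz'.2 (mem_Ficc.mp hmem).2)
          have := Finset.card_lt_card hss
          omega
        linarith [e1, e2, congrsum]
  intro x y hxy
  exact key (Ficc x y).card x y le_rfl hxy

end PosetLemmas



section Cosets
variable {G : Type*} [Group G] {p : ℕ}

lemma coset_le_of_image_subset {H K : Subgroup G} {x y : G}
    (h : (fun g => g * x) '' (H : Set G) ⊆ (fun g => g * y) '' (K : Set G)) : H ≤ K := by
  intro g hg
  obtain ⟨k, hk, hk'⟩ := h ⟨g, hg, rfl⟩
  obtain ⟨k₂, hk₂, hk₂'⟩ := h ⟨1, H.one_mem, rfl⟩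
  simp only at hk' hk₂'
  rw [one_mul] at hk₂'
  have : g = k * k₂⁻¹ := by
    have : k * y = g * x := hk'
    have h2 : k₂ * y = x := hk₂'
    calc g = (g * x) * x⁻¹ := by group
    _ = (k * y) * (k₂ * y)⁻¹ := by rw [this, h2]
    _ = k * k₂⁻¹ := by group
  rw [this]
  exact K.mul_mem hk (K.inv_mem hk₂)

lemma coset_subgroup_eq {H K : Subgroup G} {x y : G}
    (h : (fun g => g * x) '' (H : Set G) = (fun g => g * y) '' (K : Set G)) : H = K :=
  le_antisymm (coset_le_of_image_subset h.le) (coset_le_of_image_subset h.ge)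

lemma mem_own_coset (H : Subgroup G) (x : G) : x ∈ (fun g => g * x) '' (H : Set G) :=
  ⟨1, H.one_mem, one_mul x⟩

lemma coset_mono_iff {H K : Subgroup G} (x : G) :
    (fun g => g * x) '' (H : Set G) ⊆ (fun g => g * x) '' (K : Set G) ↔ H ≤ K := by
  constructor
  · intro h g hg
    obtain ⟨k, hk, hk'⟩ := h ⟨g, hg, rfl⟩
    simp only at hk'
    have : k = g := mul_right_cancel hk'
    exact this ▸ hk
  · intro h
    exact Set.image_mono h

lemma coset_rep {H : Subgroup G} {x y : G} (hy : y ∈ (fun g => g * x) '' (H : Set G)) :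
    (fun g => g * y) '' (H : Set G) = (fun g => g * x) '' (H : Set G) := by
  obtain ⟨h, hh, hh'⟩ := hy
  simp only at hh'
  subst hh'
  ext g
  constructor
  · rintro ⟨a, ha, rfl⟩
    exact ⟨a * h, H.mul_mem ha hh, by group⟩
  · rintro ⟨b, hb, rfl⟩
    exact ⟨b * h⁻¹, H.mul_mem hb (H.inv_mem hh), by group⟩

/-- The subgroup underlying a coset, via choice (it is in fact unique). -/
noncomputable def cosetSubgroup (C : ↥(pCosets p G)) : Subgroup G :=
  (show ∃ (H : Subgroup G) (x : G), IsPGroup p H ∧ C.1 = (fun h => h * x) '' (H : Set G)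
    from C.2).choose

/-- A point of the coset, via choice. -/
noncomputable def cosetPt (C : ↥(pCosets p G)) : G :=
  (show ∃ (x : G), IsPGroup p (cosetSubgroup C) ∧
      C.1 = (fun h => h * x) '' ((cosetSubgroup C : Subgroup G) : Set G)
    from (show ∃ (H : Subgroup G) (x : G), IsPGroup p H ∧
          C.1 = (fun h => h * x) '' (H : Set G) from C.2).choose_spec).choose

lemma cosetSubgroup_spec (C : ↥(pCosets p G)) :
    IsPGroup p (cosetSubgroup C) ∧
      C.1 = (fun h => h * cosetPt C) '' ((cosetSubgroup C : Subgroup G) : Set G) :=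
  (show ∃ (x : G), IsPGroup p (cosetSubgroup C) ∧
      C.1 = (fun h => h * x) '' ((cosetSubgroup C : Subgroup G) : Set G)
    from (show ∃ (H : Subgroup G) (x : G), IsPGroup p H ∧
          C.1 = (fun h => h * x) '' (H : Set G) from C.2).choose_spec).choose_spec

lemma cosetPt_mem (C : ↥(pCosets p G)) : cosetPt C ∈ C.1 := by
  rw [(cosetSubgroup_spec C).2]; exact mem_own_coset _ _

lemma cosetSubgroup_eq {C : ↥(pCosets p G)} {H : Subgroup G} {x : G}
    (h : C.1 = (fun g => g * x) '' (H : Set G)) : cosetSubgroup C = H :=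
  coset_subgroup_eq (((cosetSubgroup_spec C).2).symm.trans h)

lemma coset_eq_of_mem {C : ↥(pCosets p G)} {x : G} (hx : x ∈ C.1) :
    C.1 = (fun g => g * x) '' ((cosetSubgroup C : Subgroup G) : Set G) := by
  have h2 := (cosetSubgroup_spec C).2
  rw [h2] at hx
  rw [h2, coset_rep hx]

lemma cosets_le_iff {C D : ↥(pCosets p G)} : C ≤ D ↔ C.1 ⊆ D.1 := Iff.rfl

/-- The poset of p-subgroups together with the top. -/
abbrev QP (p : ℕ) (G : Type*) [Group G] := {H : Subgroup G // IsPGroup p H ∨ H = ⊤}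

/-- The subgroup of a coset as an element of `QP`. -/
noncomputable def cosetSgQ (C : ↥(pCosets p G)) : QP p G :=
  ⟨cosetSubgroup C, Or.inl (cosetSubgroup_spec C).1⟩

/-- Make a coset `Kx` from `K : QP` (junk if `K = ⊤`). -/
noncomputable def toCoset (x : G) (K : QP p G) : ↥(pCosets p G) :=
  if h : IsPGroup p K.1 then ⟨(fun g => g * x) '' (K.1 : Set G), ⟨K.1, x, h, rfl⟩⟩
  else ⟨(fun g => g * x) '' ((⊥ : Subgroup G) : Set G), ⟨⊥, x, IsPGroup.of_bot, rfl⟩⟩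

lemma toCoset_val {x : G} {K : QP p G} (h : IsPGroup p K.1) :
    (toCoset x K).1 = (fun g => g * x) '' (K.1 : Set G) := by
  rw [toCoset, dif_pos h]

lemma cosetSgQ_toCoset {x : G} {K : QP p G} (h : IsPGroup p K.1) :
    cosetSgQ (toCoset x K) = K := by
  apply Subtype.ext
  exact cosetSubgroup_eq (toCoset_val h)

lemma top_not_pgroup (hG : ¬ IsPGroup p G) : ¬ IsPGroup p (⊤ : Subgroup G) := fun h =>
  hG (h.of_equiv Subgroup.topEquiv)

end Cosets
section ChainBij
variable {G : Type*} [Group G] {p : ℕ}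
variable [Fintype ↥(pCosets p G)] [Fintype (QP p G)]

/-- Chains of cosets with least element `C`. -/
noncomputable def cosetChainsFrom (C : ↥(pCosets p G)) : Finset (Finset ↥(pCosets p G)) :=
  univ.filter fun s => IsChain (· ≤ ·) (s : Set ↥(pCosets p G)) ∧ C ∈ s ∧ ∀ D ∈ s, C ≤ D

/-- Chains of p-subgroups with least element `H`. -/
noncomputable def pChainsFrom (H : QP p G) : Finset (Finset (QP p G)) :=
  univ.filter fun t => IsChain (· ≤ ·) (t : Set (QP p G)) ∧ H ∈ t ∧
    (∀ K ∈ t, H ≤ K) ∧ ∀ K ∈ t, IsPGroup p K.1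

lemma mem_cosetChainsFrom {C : ↥(pCosets p G)} {s : Finset ↥(pCosets p G)} :
    s ∈ cosetChainsFrom C ↔
      IsChain (· ≤ ·) (s : Set ↥(pCosets p G)) ∧ C ∈ s ∧ ∀ D ∈ s, C ≤ D := by
  simp [cosetChainsFrom]

lemma mem_pChainsFrom {H : QP p G} {t : Finset (QP p G)} :
    t ∈ pChainsFrom H ↔
      IsChain (· ≤ ·) (t : Set (QP p G)) ∧ H ∈ t ∧
        (∀ K ∈ t, H ≤ K) ∧ ∀ K ∈ t, IsPGroup p K.1 := by
  simp [pChainsFrom]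

lemma sum_cosetChains_eq (C : ↥(pCosets p G)) :
    ∑ s ∈ cosetChainsFrom C, (-1 : ℤ) ^ (s.card + 1)
      = ∑ t ∈ pChainsFrom (cosetSgQ C), (-1 : ℤ) ^ (t.card + 1) := by
  have hxm : cosetPt C ∈ C.1 := cosetPt_mem C
  set x := cosetPt C with hxdef
  have fact1 : ∀ D : ↥(pCosets p G), C ≤ D →
      D.1 = (fun g => g * x) '' ((cosetSubgroup D : Subgroup G) : Set G) :=
    fun D hD => coset_eq_of_mem (hD hxm)
  have fact2 : ∀ D E : ↥(pCosets p G), C ≤ D → C ≤ E →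
      (D ≤ E ↔ cosetSubgroup D ≤ cosetSubgroup E) := by
    intro D E hD hE
    rw [cosets_le_iff, fact1 D hD, fact1 E hE]
    exact_mod_cast coset_mono_iff x
  have hinj : ∀ D E : ↥(pCosets p G), C ≤ D → C ≤ E → cosetSgQ D = cosetSgQ E → D = E := by
    intro D E hD hE h
    apply Subtype.ext
    rw [fact1 D hD, fact1 E hE, show cosetSubgroup D = cosetSubgroup E from congrArg Subtype.val h]
  have sgQ_le : ∀ D E : ↥(pCosets p G),
      (cosetSgQ D ≤ cosetSgQ E) ↔ cosetSubgroup D ≤ cosetSubgroup E := fun D E => Iff.rfl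
  refine Finset.sum_nbij' (i := fun s => s.image cosetSgQ)
    (j := fun t => t.image (toCoset x)) ?_ ?_ ?_ ?_ ?_
  · -- maps to
    intro s hs
    rw [mem_cosetChainsFrom] at hs
    obtain ⟨hc, hCs, hleast⟩ := hs
    rw [mem_pChainsFrom]
    refine ⟨?_, Finset.mem_image_of_mem _ hCs, ?_, ?_⟩
    · rw [Finset.coe_image]
      rintro _ ⟨D, hD, rfl⟩ _ ⟨E, hE, rfl⟩ hne
      have hDE : D ≠ E := fun h => hne (by rw [h])
      rcases hc hD hE hDE with h | h
      · exact Or.inl ((sgQ_le D E).mpr ((fact2 D E (hleast D hD) (hleast E hE)).mp h))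
      · exact Or.inr ((sgQ_le E D).mpr ((fact2 E D (hleast E hE) (hleast D hD)).mp h))
    · intro K hK
      obtain ⟨D, hD, rfl⟩ := Finset.mem_image.mp hK
      exact (sgQ_le C D).mpr ((fact2 C D le_rfl (hleast D hD)).mp (hleast D hD))
    · intro K hK
      obtain ⟨D, hD, rfl⟩ := Finset.mem_image.mp hK
      exact (cosetSubgroup_spec D).1
  · -- reverse maps to
    intro t ht
    rw [mem_pChainsFrom] at ht
    obtain ⟨hc, hHt, hleast, hP⟩ := ht
    rw [mem_cosetChainsFrom]
    have hCval : ∀ K ∈ t, (toCoset x K).1 = (fun g => g * x) '' (K.1 : Set G) :=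
      fun K hK => toCoset_val (hP K hK)
    have hCtop : toCoset x (cosetSgQ C) = C := by
      apply Subtype.ext
      rw [hCval _ hHt]
      exact (coset_eq_of_mem hxm).symm
    refine ⟨?_, ?_, ?_⟩
    · rw [Finset.coe_image]
      rintro _ ⟨K, hK, rfl⟩ _ ⟨L, hL, rfl⟩ hne
      have hKL : K ≠ L := fun h => hne (by rw [h])
      rcases hc hK hL hKL with h | h
      · refine Or.inl ?_
        show (toCoset x K).1 ⊆ (toCoset x L).1
        rw [hCval K hK, hCval L hL]
        exact (coset_mono_iff x).mpr h
      · refine Or.inr ?_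
        show (toCoset x L).1 ⊆ (toCoset x K).1
        rw [hCval L hL, hCval K hK]
        exact (coset_mono_iff x).mpr h
    · rw [← hCtop]
      exact Finset.mem_image_of_mem _ hHt
    · intro D hD
      obtain ⟨K, hK, rfl⟩ := Finset.mem_image.mp hD
      show C.1 ⊆ (toCoset x K).1
      rw [hCval K hK, coset_eq_of_mem hxm]
      exact (coset_mono_iff x).mpr (hleast K hK)
  · -- left inverse
    intro s hs
    rw [mem_cosetChainsFrom] at hs
    obtain ⟨hc, hCs, hleast⟩ := hs
    rw [Finset.image_image]
    have : ∀ D ∈ s, (toCoset x ∘ cosetSgQ) D = D := by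
      intro D hD
      apply Subtype.ext
      have hpD : IsPGroup p (cosetSgQ D).1 := (cosetSubgroup_spec D).1
      show (toCoset x (cosetSgQ D)).1 = D.1
      rw [toCoset_val hpD]
      exact (fact1 D (hleast D hD)).symm
    rw [Finset.image_congr (fun D hD => this D hD)]
    exact Finset.image_id
  · -- right inverse
    intro t ht
    rw [mem_pChainsFrom] at ht
    obtain ⟨hc, hHt, hleast, hP⟩ := ht
    rw [Finset.image_image]
    have : ∀ K ∈ t, (cosetSgQ ∘ toCoset x) K = K := by
      intro K hK
      exact cosetSgQ_toCoset (hP K hK)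
    rw [Finset.image_congr (fun K hK => this K hK)]
    exact Finset.image_id
  · -- values
    intro s hs
    rw [mem_cosetChainsFrom] at hs
    obtain ⟨hc, hCs, hleast⟩ := hs
    have : (s.image cosetSgQ).card = s.card := by
      apply Finset.card_image_of_injOn
      intro D hD E hE h
      exact hinj D E (hleast D hD) (hleast E hE) h
    rw [this]

lemma card_coset_fiber [Fintype G] {H : QP p G} (hH : IsPGroup p H.1) :
    (univ.filter fun C : ↥(pCosets p G) => cosetSgQ C = H).card = H.1.index := by
  have hidx : H.1.index = Fintype.card (G ⧸ H.1) := by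
    rw [Subgroup.index]; exact Nat.card_eq_fintype_card
  rw [hidx, ← Finset.card_univ]
  apply Finset.card_bij (fun C _ => (QuotientGroup.mk (cosetPt C)⁻¹ : G ⧸ H.1))
  · intro a ha; exact Finset.mem_univ _
  · intro C1 h1 C2 h2 heq
    rw [Finset.mem_filter] at h1 h2
    have e1 : cosetSubgroup C1 = H.1 := congrArg Subtype.val h1.2
    have e2 : cosetSubgroup C2 = H.1 := congrArg Subtype.val h2.2
    rw [QuotientGroup.eq] at heq
    simp only [inv_inv] at heq
    -- heq : cosetPt C1 * (cosetPt C2)⁻¹ ∈ H.1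
    have hm : cosetPt C1 ∈ (fun g => g * cosetPt C2) '' (H.1 : Set G) :=
      ⟨cosetPt C1 * (cosetPt C2)⁻¹, heq, by group⟩
    apply Subtype.ext
    have v1 := (cosetSubgroup_spec C1).2
    have v2 := (cosetSubgroup_spec C2).2
    rw [e1] at v1; rw [e2] at v2
    rw [v1, v2, coset_rep hm]
  · intro b hb
    obtain ⟨g, rfl⟩ := QuotientGroup.mk_surjective b
    refine ⟨⟨(fun h => h * g⁻¹) '' (H.1 : Set G), ⟨H.1, g⁻¹, hH, rfl⟩⟩, ?_, ?_⟩
    · rw [Finset.mem_filter]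
      exact ⟨Finset.mem_univ _, Subtype.ext (cosetSubgroup_eq rfl)⟩
    · set C : ↥(pCosets p G) := ⟨(fun h => h * g⁻¹) '' (H.1 : Set G), ⟨H.1, g⁻¹, hH, rfl⟩⟩
      obtain ⟨h, hh, hh'⟩ := cosetPt_mem C
      rw [QuotientGroup.eq]
      simp only [inv_inv]
      have : cosetPt C * g = h := by rw [← hh']; group
      rw [this]
      exact hh

end ChainBij
section TopLemma
variable {G : Type*} [Group G] {p : ℕ} [Fintype ↥(pCosets p G)] [Fintype (QP p G)]

lemma hallMu_top (hG : ¬ IsPGroup p G) (H : QP p G) (hH : IsPGroup p H.1) :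
    hallMu H (⟨⊤, Or.inr rfl⟩ : QP p G)
      = -∑ t ∈ pChainsFrom H, (-1 : ℤ) ^ (t.card + 1) := by
  set T : QP p G := ⟨⊤, Or.inr rfl⟩ with hTdef
  have hTtop : ∀ K : QP p G, K ≤ T := fun K => by
    show K.1 ≤ (⊤ : Subgroup G); exact le_top
  have hTnotP : ¬ IsPGroup p T.1 := top_not_pgroup hG
  have hHT : H ≠ T := fun h => hTnotP (h ▸ hH)
  rw [hallMu, ← Finset.sum_neg_distrib]
  refine Finset.sum_nbij' (i := fun t => t.erase T) (j := fun t => insert T t) ?_ ?_ ?_ ?_ ?_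
  · intro t ht
    rw [mem_chainsTo] at ht
    obtain ⟨hc, hHt, hTt, hb⟩ := ht
    rw [mem_pChainsFrom]
    refine ⟨hc.mono ?_, Finset.mem_erase.mpr ⟨hHT, hHt⟩, ?_, ?_⟩
    · exact_mod_cast Finset.coe_subset.mpr (Finset.erase_subset T t)
    · exact fun K hK => (hb K (Finset.erase_subset T t hK)).1
    · intro K hK
      obtain ⟨hKT, hKt⟩ := Finset.mem_erase.mp hK
      rcases K.2 with h | h
      · exact h
      · exact absurd (Subtype.ext h) hKT
  · intro t ht
    rw [mem_pChainsFrom] at ht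
    obtain ⟨hc, hHt, hleast, hP⟩ := ht
    rw [mem_chainsTo]
    refine ⟨?_, Finset.mem_insert_of_mem hHt, Finset.mem_insert_self T t, ?_⟩
    · rw [Finset.coe_insert]
      exact hc.insert fun b hb hne => Or.inr (hTtop b)
    · intro z hz
      rcases Finset.mem_insert.mp hz with rfl | hz'
      · exact ⟨hTtop H, le_rfl⟩
      · exact ⟨hleast z hz', hTtop z⟩
  · intro t ht
    rw [mem_chainsTo] at ht
    exact Finset.insert_erase ht.2.2.1
  · intro t ht
    rw [mem_pChainsFrom] at ht
    have : T ∉ t := fun h => hTnotP (ht.2.2.2 T h)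
    exact Finset.erase_insert this
  · intro t ht
    rw [mem_chainsTo] at ht
    have hcard : (t.erase T).card = t.card - 1 := Finset.card_erase_of_mem ht.2.2.1
    have hpos : 1 ≤ t.card := Finset.card_pos.mpr ⟨T, ht.2.2.1⟩
    obtain ⟨c, hc⟩ : ∃ c, t.card = c + 1 := ⟨t.card - 1, (Nat.succ_pred_eq_of_pos hpos).symm⟩
    rw [hcard, hc]
    simp only [Nat.add_sub_cancel, pow_succ]
    ring

end TopLemma

/-- If the finite group `G` is not a `p`-group, then
`χ(C_p(G)) = -Σ_{H ∈ S_p(G) ∪ {1}} μ(H,G)·[G:H]`, where `μ` is the Möbius function of the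
poset `S_p(G) ∪ {1, G}` of all `p`-subgroups of `G` together with `G`, ordered by inclusion. -/
theorem euler_char_pCosets_eq_neg_sum_mobius {G : Type*} [Group G] [Fintype G] {p : ℕ}
    (hp : p.Prime) (hG : ¬ IsPGroup p G)
    (μ : {H : Subgroup G // IsPGroup p H ∨ H = ⊤} →
         {H : Subgroup G // IsPGroup p H ∨ H = ⊤} → ℤ)
    (hμ : IsMobiusOf μ) :
    posetEulerChar ↥(pCosets p G) =
      -∑ᶠ (H : {H : Subgroup G // IsPGroup p H ∨ H = ⊤}) (_ : IsPGroup p H.val),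
        μ H ⟨⊤, Or.inr rfl⟩ * (H.val.index : ℤ) := by
  classical
  letI instP : Fintype ↥(pCosets p G) := Fintype.ofFinite _
  letI instQ : Fintype (QP p G) := Fintype.ofFinite _
  haveI hnP : Nonempty ↥(pCosets p G) :=
    ⟨⟨(fun h => h * (1 : G)) '' ((⊥ : Subgroup G) : Set G), ⟨⊥, 1, IsPGroup.of_bot, rfl⟩⟩⟩
  haveI hnQ : Nonempty (QP p G) := ⟨⟨⊤, Or.inr rfl⟩⟩
  -- uniqueness of the Möbius function
  have h2' : ∀ x y : QP p G, x < y → ∑ z ∈ Ficc x y, μ x z = 0 := by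
    intro x y h
    have h2 := hμ.2 x y h
    rwa [← coe_Ficc, finsum_mem_coe_finset] at h2
  have hμhall : ∀ H : QP p G, μ H ⟨⊤, Or.inr rfl⟩ = hallMu H ⟨⊤, Or.inr rfl⟩ := fun H =>
    IsMobiusOf_eq_hallMu' μ hμ.1 h2' H ⟨⊤, Or.inr rfl⟩
      (show H.1 ≤ (⊤ : Subgroup G) from le_top)
  have step0 : posetEulerChar ↥(pCosets p G) =
      ∑ s ∈ univ.filter (fun s : Finset ↥(pCosets p G) =>
        s.Nonempty ∧ IsChain (· ≤ ·) (s : Set ↥(pCosets p G))), (-1 : ℤ) ^ (s.card + 1) := by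
    rw [posetEulerChar, Finset.powerset_univ, Finset.sum_filter]
  have step1 :
      ∑ s ∈ univ.filter (fun s : Finset ↥(pCosets p G) =>
        s.Nonempty ∧ IsChain (· ≤ ·) (s : Set ↥(pCosets p G))), (-1 : ℤ) ^ (s.card + 1)
      = ∑ C : ↥(pCosets p G), ∑ s ∈ cosetChainsFrom C, (-1 : ℤ) ^ (s.card + 1) := by
    rw [← Finset.sum_fiberwise (univ.filter (fun s : Finset ↥(pCosets p G) =>
        s.Nonempty ∧ IsChain (· ≤ ·) (s : Set ↥(pCosets p G)))) chainBot
        (fun s => (-1 : ℤ) ^ (s.card + 1))]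
    refine Finset.sum_congr rfl fun C _ => Finset.sum_congr ?_ fun _ _ => rfl
    ext s
    simp only [Finset.mem_filter, mem_cosetChainsFrom, Finset.mem_univ, true_and]
    constructor
    · rintro ⟨⟨hne', hc⟩, hbot⟩
      obtain ⟨hmem, hleast⟩ := chainBot_spec hc hne'
      rw [hbot] at hmem hleast
      exact ⟨hc, hmem, hleast⟩
    · rintro ⟨hc, hmem, hleast⟩
      exact ⟨⟨⟨C, hmem⟩, hc⟩, chainBot_eq hmem hleast⟩
  have step2 :
      ∑ C : ↥(pCosets p G), ∑ s ∈ cosetChainsFrom C, (-1 : ℤ) ^ (s.card + 1)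
      = ∑ C : ↥(pCosets p G), ∑ t ∈ pChainsFrom (cosetSgQ C), (-1 : ℤ) ^ (t.card + 1) :=
    Finset.sum_congr rfl fun C _ => sum_cosetChains_eq C
  have step3 :
      ∑ C : ↥(pCosets p G), ∑ t ∈ pChainsFrom (cosetSgQ C), (-1 : ℤ) ^ (t.card + 1)
      = ∑ H : QP p G, ((univ.filter fun C : ↥(pCosets p G) => cosetSgQ C = H).card : ℤ) *
          ∑ t ∈ pChainsFrom H, (-1 : ℤ) ^ (t.card + 1) := by
    rw [← Finset.sum_fiberwise univ cosetSgQ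
        (fun C : ↥(pCosets p G) => ∑ t ∈ pChainsFrom (cosetSgQ C), (-1 : ℤ) ^ (t.card + 1))]
    refine Finset.sum_congr rfl fun H _ => ?_
    rw [Finset.sum_congr rfl (fun C hC => by
      rw [(Finset.mem_filter.mp hC).2] :
        ∀ C ∈ univ.filter fun C : ↥(pCosets p G) => cosetSgQ C = H,
          (∑ t ∈ pChainsFrom (cosetSgQ C), (-1 : ℤ) ^ (t.card + 1))
            = ∑ t ∈ pChainsFrom H, (-1 : ℤ) ^ (t.card + 1))]
    rw [Finset.sum_const, nsmul_eq_mul]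
  have step4 : ∀ H : QP p G,
      ((univ.filter fun C : ↥(pCosets p G) => cosetSgQ C = H).card : ℤ) *
          (∑ t ∈ pChainsFrom H, (-1 : ℤ) ^ (t.card + 1))
      = if IsPGroup p H.1 then
          (H.1.index : ℤ) * ∑ t ∈ pChainsFrom H, (-1 : ℤ) ^ (t.card + 1) else 0 := by
    intro H
    by_cases hH : IsPGroup p H.1
    · rw [if_pos hH, card_coset_fiber hH]
    · rw [if_neg hH]
      have hempty : (univ.filter fun C : ↥(pCosets p G) => cosetSgQ C = H) = ∅ := by
        apply Finset.filter_eq_empty_iff.mpr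
        intro C _ h
        exact hH (by rw [← h]; exact (cosetSubgroup_spec C).1)
      rw [hempty]
      simp
  have step5 : ∀ H : QP p G,
      (if IsPGroup p H.1 then
          (H.1.index : ℤ) * ∑ t ∈ pChainsFrom H, (-1 : ℤ) ^ (t.card + 1) else 0)
      = if IsPGroup p H.1 then -(μ H ⟨⊤, Or.inr rfl⟩ * (H.1.index : ℤ)) else 0 := by
    intro H
    by_cases hH : IsPGroup p H.1
    · rw [if_pos hH, if_pos hH, hμhall H, hallMu_top hG H hH]
      ring
    · rw [if_neg hH, if_neg hH]
  have rhsstep :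
      -∑ᶠ (H : QP p G) (_ : IsPGroup p H.val), μ H ⟨⊤, Or.inr rfl⟩ * (H.val.index : ℤ)
      = ∑ H : QP p G,
          if IsPGroup p H.1 then -(μ H ⟨⊤, Or.inr rfl⟩ * (H.1.index : ℤ)) else 0 := by
    rw [finsum_eq_sum_of_fintype, ← Finset.sum_neg_distrib]
    refine Finset.sum_congr rfl fun H _ => ?_
    rw [finsum_eq_if]
    by_cases hH : IsPGroup p H.1
    · rw [if_pos hH, if_pos hH]
    · rw [if_neg hH, if_neg hH, neg_zero]
  calc posetEulerChar ↥(pCosets p G)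
      = ∑ s ∈ univ.filter (fun s : Finset ↥(pCosets p G) =>
          s.Nonempty ∧ IsChain (· ≤ ·) (s : Set ↥(pCosets p G))), (-1 : ℤ) ^ (s.card + 1) :=
        step0
    _ = ∑ C : ↥(pCosets p G), ∑ s ∈ cosetChainsFrom C, (-1 : ℤ) ^ (s.card + 1) := step1
    _ = ∑ C : ↥(pCosets p G), ∑ t ∈ pChainsFrom (cosetSgQ C), (-1 : ℤ) ^ (t.card + 1) := step2
    _ = ∑ H : QP p G, ((univ.filter fun C : ↥(pCosets p G) => cosetSgQ C = H).card : ℤ) *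
          ∑ t ∈ pChainsFrom H, (-1 : ℤ) ^ (t.card + 1) := step3
    _ = ∑ H : QP p G, if IsPGroup p H.1 then
          (H.1.index : ℤ) * ∑ t ∈ pChainsFrom H, (-1 : ℤ) ^ (t.card + 1) else 0 :=
        Finset.sum_congr rfl fun H _ => step4 H
    _ = ∑ H : QP p G,
          if IsPGroup p H.1 then -(μ H ⟨⊤, Or.inr rfl⟩ * (H.1.index : ℤ)) else 0 :=
        Finset.sum_congr rfl fun H _ => step5 H
    _ = -∑ᶠ (H : QP p G) (_ : IsPGroup p H.val), μ H ⟨⊤, Or.inr rfl⟩ * (H.val.index : ℤ) :=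
        rhsstep.symm
end

section
/- Let G be a finite group and p a prime. Then χ(C_p(G)) = 1 if and only if G is a p-group. -/
open scoped Classical in
lemma posetEulerChar_eq_one_of_top {P : Type*} [PartialOrder P] [Finite P]
    (T : P) (hT : ∀ x, x ≤ T) : posetEulerChar P = 1 := by
  letI := Fintype.ofFinite P
  have hchain_insert : ∀ s : Finset P, IsChain (· ≤ ·) ((s : Set P)) ↔
      IsChain (· ≤ ·) ((insert T s : Finset P) : Set P) := by
    intro s
    rw [Finset.coe_insert]
    exact ⟨fun h => h.insert (fun x _ _ => Or.inr (hT x)),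
      fun h => h.mono (Set.subset_insert _ _)⟩
  have key : ∑ s ∈ (Finset.univ : Finset P).powerset,
      (if IsChain (· ≤ ·) ((s : Set P)) then (-1 : ℤ) ^ (s.card + 1) else 0) = 0 := by
    refine Finset.sum_ninvolution (fun s => if T ∈ s then s.erase T else insert T s)
      ?_ ?_ ?_ ?_
    · intro s
      by_cases hTs : T ∈ s
      · simp only [hTs, if_pos]
        have h1 : insert T (s.erase T) = s := Finset.insert_erase hTs
        have h2 : IsChain (· ≤ ·) ((s.erase T : Set P)) ↔ IsChain (· ≤ ·) ((s : Set P)) := by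
          rw [hchain_insert (s.erase T), h1]
        by_cases hc : IsChain (· ≤ ·) ((s : Set P))
        · rw [if_pos hc, if_pos (h2.mpr hc)]
          have hcard : s.card = (s.erase T).card + 1 := by
            have := Finset.card_pos.mpr ⟨T, hTs⟩
            rw [Finset.card_erase_of_mem hTs]; omega
          rw [hcard, pow_succ]; ring
        · rw [if_neg hc, if_neg (fun h => hc (h2.mp h))]; ring
      · simp only [hTs, if_neg, if_false]
        by_cases hc : IsChain (· ≤ ·) ((s : Set P))
        · rw [if_pos hc, if_pos ((hchain_insert s).mp hc),
            Finset.card_insert_of_notMem hTs, pow_succ]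
          ring
        · rw [if_neg hc, if_neg (fun h => hc ((hchain_insert s).mpr h))]; ring
    · intro s _
      by_cases hTs : T ∈ s
      · simp only [hTs, if_pos]
        intro h
        exact (Finset.notMem_erase T s) (h.symm ▸ hTs)
      · simp only [hTs, if_neg, if_false]
        intro h
        exact hTs (h ▸ Finset.mem_insert_self T s)
    · intro s; simp [Finset.mem_powerset]
    · intro s
      by_cases hTs : T ∈ s
      · simp only [hTs, if_pos]
        rw [if_neg (Finset.notMem_erase T s), Finset.insert_erase hTs]
      · simp only [hTs, if_neg, if_false]
        rw [if_pos (Finset.mem_insert_self T s), Finset.erase_insert hTs]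
  have expand : posetEulerChar P =
      ∑ s ∈ (Finset.univ : Finset P).powerset,
        (if s.Nonempty ∧ IsChain (· ≤ ·) (s : Set P) then (-1 : ℤ) ^ (s.card + 1) else 0) := rfl
  have split : ∀ s : Finset P,
      (if IsChain (· ≤ ·) ((s : Set P)) then (-1 : ℤ) ^ (s.card + 1) else 0) =
      (if s.Nonempty ∧ IsChain (· ≤ ·) (s : Set P) then (-1 : ℤ) ^ (s.card + 1) else 0)
        + (if s = ∅ then -1 else 0) := by
    intro s
    rcases s.eq_empty_or_nonempty with rfl | hne
    · simp
    · rw [if_neg (Finset.nonempty_iff_ne_empty.mp hne), add_zero]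
      by_cases hc : IsChain (· ≤ ·) ((s : Set P))
      · rw [if_pos hc, if_pos ⟨hne, hc⟩]
      · rw [if_neg hc, if_neg (fun h => hc h.2)]
  rw [expand]
  have := key
  rw [Finset.sum_congr rfl (fun s _ => split s), Finset.sum_add_distrib] at this
  have h2 : ∑ s ∈ (Finset.univ : Finset P).powerset,
      (if s = ∅ then (-1 : ℤ) else 0) = -1 := by
    rw [Finset.sum_ite_eq' _ (∅ : Finset P) (fun _ => (-1 : ℤ))]
    simp
  rw [h2] at this
  omega


lemma key_dvd {α : Type*} [DecidableEq α] (g : α → α) (hg : Function.Injective g)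
    (q : ℕ) (hq : q.Prime) (f : α → ℤ) (hf : ∀ a, f (g a) = f a) :
    ∀ (s : Finset α), (∀ a ∈ s, g a ∈ s) → (∀ a ∈ s, g^[q] a = a) →
      (∀ a ∈ s, g a ≠ a) → (q : ℤ) ∣ ∑ a ∈ s, f a := by
  intro s
  induction s using Finset.strongInduction with | _ s ih => ?_
  intro hcl hper hfix
  rcases s.eq_empty_or_nonempty with rfl | ⟨a, ha⟩
  · simp
  have horb : ∀ k, g^[k] a ∈ s := by
    intro k
    induction k with
    | zero => exact ha
    | succ n ihn => rw [Function.iterate_succ_apply']; exact hcl _ ihn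
  have hmin : Function.minimalPeriod g a = q := by
    have hper' : Function.IsPeriodicPt g q a := hper a ha
    rcases (hq.eq_one_or_self_of_dvd _ hper'.minimalPeriod_dvd) with h1 | h
    · exact absurd (Function.minimalPeriod_eq_one_iff_isFixedPt.mp h1) (hfix a ha)
    · exact h
  have hinj : Set.InjOn (fun k => g^[k] a) (Finset.range q : Set ℕ) := by
    intro i hi j hj hij
    have hi' : i ∈ Set.Iio (Function.minimalPeriod g a) := by
      simpa [hmin] using (Finset.mem_coe.mp hi)
    have hj' : j ∈ Set.Iio (Function.minimalPeriod g a) := by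
      simpa [hmin] using (Finset.mem_coe.mp hj)
    exact Function.iterate_injOn_Iio_minimalPeriod hi' hj' hij
  set o : Finset α := (Finset.range q).image (fun k => g^[k] a) with ho
  have hao : a ∈ o := by
    refine Finset.mem_image.mpr ⟨0, Finset.mem_range.mpr hq.pos, rfl⟩
  have hos : o ⊆ s := by
    intro b hb
    rcases Finset.mem_image.mp hb with ⟨k, _, rfl⟩
    exact horb k
  have hcardo : o.card = q := by
    rw [ho, Finset.card_image_of_injOn hinj, Finset.card_range]
  have hfk : ∀ k, f (g^[k] a) = f a := by
    intro k
    induction k with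
    | zero => rfl
    | succ n ihn => rw [Function.iterate_succ_apply', hf]; exact ihn
  have hfo : ∀ b ∈ o, f b = f a := by
    intro b hb
    rcases Finset.mem_image.mp hb with ⟨k, _, rfl⟩
    exact hfk k
  have hsum_o : ∑ b ∈ o, f b = q * f a := by
    rw [Finset.sum_congr rfl hfo, Finset.sum_const, hcardo, nsmul_eq_mul]
  have hclosed : ∀ b ∈ s \ o, g b ∈ s \ o := by
    intro b hb
    rcases Finset.mem_sdiff.mp hb with ⟨hbs, hbo⟩
    refine Finset.mem_sdiff.mpr ⟨hcl b hbs, ?_⟩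
    intro hgbo
    rcases Finset.mem_image.mp hgbo with ⟨k, hk, hkb⟩
    rcases Nat.eq_zero_or_pos k with rfl | hkpos
    · -- g b = a, so b = g^[q-1] a
      apply hbo
      refine Finset.mem_image.mpr ⟨q - 1, Finset.mem_range.mpr (by have := hq.pos; omega), ?_⟩
      have hperb : g^[q] b = b := hper b hbs
      have hq1 : q - 1 + 1 = q := by have := hq.pos; omega
      have hkb' : a = g b := hkb
      have h5 : g^[q-1+1] b = g^[q-1] (g b) := Function.iterate_succ_apply g (q-1) b
      rw [hq1] at h5
      calc g^[q-1] a = g^[q-1] (g b) := by rw [hkb']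
        _ = g^[q] b := h5.symm
        _ = b := hperb
    · -- g b = g^[k] a = g (g^[k-1] a)
      apply hbo
      have hk1 : k - 1 + 1 = k := by omega
      have h5 : g^[k-1+1] a = g (g^[k-1] a) := Function.iterate_succ_apply' g (k-1) a
      rw [hk1] at h5
      have : g b = g (g^[k-1] a) := by rw [← h5]; exact hkb.symm
      refine Finset.mem_image.mpr ⟨k - 1, Finset.mem_range.mpr (by
        have := Finset.mem_range.mp hk; omega), (hg this).symm⟩
  have hsplit : ∑ b ∈ s \ o, f b + ∑ b ∈ o, f b = ∑ b ∈ s, f b :=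
    Finset.sum_sdiff hos
  have hss : s \ o ⊂ s := by
    refine Finset.ssubset_iff_of_subset (Finset.sdiff_subset) |>.mpr ?_
    exact ⟨a, ha, fun h => (Finset.mem_sdiff.mp h).2 hao⟩
  have hdvd1 : (q : ℤ) ∣ ∑ b ∈ s \ o, f b :=
    ih _ hss (fun b hb => hclosed b hb)
      (fun b hb => hper b (Finset.mem_sdiff.mp hb).1)
      (fun b hb => hfix b (Finset.mem_sdiff.mp hb).1)
  rw [← hsplit, hsum_o]
  exact dvd_add hdvd1 ⟨f a, rfl⟩

lemma chain_fixed {P : Type*} [PartialOrder P] [DecidableEq P] (σ : P → P)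
    (hmono : ∀ a b : P, a ≤ b → σ a ≤ σ b) (s : Finset P) (hne : s.Nonempty)
    (hchain : IsChain (· ≤ ·) (s : Set P)) (hfix : s.image σ = s) :
    ∃ a ∈ s, σ a = a := by
  obtain ⟨M, hMs, hMmax⟩ := s.exists_maximal hne
  have hMtop : ∀ b ∈ s, b ≤ M := by
    intro b hbs
    rcases eq_or_ne b M with rfl | hbM
    · exact le_rfl
    · rcases hchain hbs hMs hbM with h | h
      · exact h
      · exact hMmax hbs h
  have hσM : σ M ∈ s := by
    rw [← hfix]; exact Finset.mem_image_of_mem σ hMs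
  obtain ⟨N, hNs, hNM⟩ := Finset.mem_image.mp (hfix ▸ hMs)
  refine ⟨M, hMs, le_antisymm (hMtop _ hσM) ?_⟩
  calc M = σ N := hNM.symm
    _ ≤ σ M := hmono _ _ (hMtop N hNs)

open scoped Classical in
lemma dvd_posetEulerChar {P : Type*} [PartialOrder P] [Finite P] {q : ℕ} (hq : q.Prime)
    (σ : P → P) (hinj : Function.Injective σ)
    (hmono : ∀ a b : P, a ≤ b → σ a ≤ σ b) (hrefl : ∀ a b : P, σ a ≤ σ b → a ≤ b)
    (hper : ∀ a, σ^[q] a = a) (hfix : ∀ a, σ a ≠ a) :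
    (q : ℤ) ∣ posetEulerChar P := by
  letI := Fintype.ofFinite P
  set F : Finset P → ℤ := fun s =>
    if s.Nonempty ∧ IsChain (· ≤ ·) (s : Set P) then (-1 : ℤ) ^ (s.card + 1) else 0 with hF
  have expand : posetEulerChar P = ∑ s ∈ (Finset.univ : Finset P).powerset, F s := rfl
  set τ : Finset P → Finset P := fun s => s.image σ with hτ
  have τinj : Function.Injective τ := Finset.image_injective hinj
  have τiter : ∀ (k : ℕ) (s : Finset P), τ^[k] s = s.image (σ^[k]) := by
    intro k
    induction k with
    | zero => intro s; simp
    | succ n ihn =>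
      intro s
      rw [Function.iterate_succ_apply', ihn, hτ]
      simp only [Finset.image_image]
      congr 1
      exact (Function.iterate_succ' σ n).symm
  have τper : ∀ s : Finset P, τ^[q] s = s := by
    intro s
    rw [τiter q s]
    have : ∀ a ∈ s, σ^[q] a = id a := fun a _ => hper a
    rw [Finset.image_congr fun a ha => this a ha, Finset.image_id]
  have hfτ : ∀ s : Finset P, F (τ s) = F s := by
    intro s
    have hcard : (τ s).card = s.card := Finset.card_image_of_injective s hinj
    have hne : (τ s).Nonempty ↔ s.Nonempty := by
      simp [hτ, Finset.image_nonempty]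
    have hchain : IsChain (· ≤ ·) ((τ s : Finset P) : Set P) ↔ IsChain (· ≤ ·) (s : Set P) := by
      simp only [hτ, Finset.coe_image]
      constructor
      · intro h a ha b hb hab
        rcases h (Set.mem_image_of_mem σ ha) (Set.mem_image_of_mem σ hb)
          (fun hh => hab (hinj hh)) with hc | hc
        · exact Or.inl (hrefl _ _ hc)
        · exact Or.inr (hrefl _ _ hc)
      · intro h a ha b hb hab
        rcases ha with ⟨a', ha', rfl⟩
        rcases hb with ⟨b', hb', rfl⟩
        rcases h ha' hb' (fun hh => hab (congrArg σ hh)) with hc | hc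
        · exact Or.inl (hmono _ _ hc)
        · exact Or.inr (hmono _ _ hc)
    rw [hF]
    simp only [hcard, hne, hchain]
  have hzero : ∀ s : Finset P, τ s = s → F s = 0 := by
    intro s hs
    rw [hF]
    by_cases h : s.Nonempty ∧ IsChain (· ≤ ·) (s : Set P)
    · obtain ⟨a, _, ha⟩ := chain_fixed σ hmono s h.1 h.2 hs
      exact absurd ha (hfix a)
    · simp only [h, if_neg, if_false]
  rw [expand, Finset.powerset_univ]
  rw [← Finset.sum_filter_add_sum_filter_not Finset.univ (fun s => τ s ≠ s) F]
  have h2 : ∑ s ∈ Finset.univ.filter (fun s => ¬ τ s ≠ s), F s = 0 := by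
    refine Finset.sum_eq_zero ?_
    intro s hs
    exact hzero s (not_not.mp (Finset.mem_filter.mp hs).2)
  rw [h2, add_zero]
  refine key_dvd τ τinj q hq F hfτ _ ?_ (fun s _ => τper s) ?_
  · intro s hs
    refine Finset.mem_filter.mpr ⟨Finset.mem_univ _, ?_⟩
    have := (Finset.mem_filter.mp hs).2
    exact fun h => this (τinj h)
  · intro s hs
    exact (Finset.mem_filter.mp hs).2

def mulRightCoset {G : Type*} [Group G] {p : ℕ} (g : G) (C : ↥(pCosets p G)) :
    ↥(pCosets p G) :=
  ⟨(fun a => a * g) '' C.1, by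
    obtain ⟨H, x, hH, hCx⟩ := C.2
    refine ⟨H, x * g, hH, ?_⟩
    rw [hCx, Set.image_image]
    simp [mul_assoc]⟩

lemma mulRightCoset_coe {G : Type*} [Group G] {p : ℕ} (g : G) (C : ↥(pCosets p G)) :
    (mulRightCoset g C).1 = (fun a => a * g) '' C.1 := rfl

lemma mulRightCoset_comp {G : Type*} [Group G] {p : ℕ} (g₁ g₂ : G) (C : ↥(pCosets p G)) :
    mulRightCoset g₂ (mulRightCoset g₁ C) = mulRightCoset (g₁ * g₂) C := by
  refine Subtype.ext ?_
  rw [mulRightCoset_coe, mulRightCoset_coe, mulRightCoset_coe, Set.image_image]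
  simp [mul_assoc]

lemma mulRightCoset_one {G : Type*} [Group G] {p : ℕ} (C : ↥(pCosets p G)) :
    mulRightCoset (1 : G) C = C := by
  refine Subtype.ext ?_
  rw [mulRightCoset_coe]
  simp

lemma mulRightCoset_inj {G : Type*} [Group G] {p : ℕ} (g : G) :
    Function.Injective (mulRightCoset (p := p) g) := by
  intro C D h
  have := congrArg (mulRightCoset g⁻¹) h
  rwa [mulRightCoset_comp, mulRightCoset_comp, mul_inv_cancel, mulRightCoset_one,
    mulRightCoset_one] at this

lemma mulRightCoset_mono {G : Type*} [Group G] {p : ℕ} (g : G) (C D : ↥(pCosets p G))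
    (h : C ≤ D) : mulRightCoset g C ≤ mulRightCoset g D := by
  have h' : C.1 ⊆ D.1 := h
  exact Set.image_mono h'

lemma mulRightCoset_refl {G : Type*} [Group G] {p : ℕ} (g : G) (C D : ↥(pCosets p G))
    (h : mulRightCoset g C ≤ mulRightCoset g D) : C ≤ D := by
  have h' : (fun a => a * g) '' C.1 ⊆ (fun a => a * g) '' D.1 := h
  have hinj : Function.Injective (fun a : G => a * g) := fun a b hab => by
    simpa using mul_right_cancel hab
  exact (Set.image_subset_image_iff hinj).mp h'

lemma mulRightCoset_iterate {G : Type*} [Group G] {p : ℕ} (g : G) (k : ℕ) (C : ↥(pCosets p G)) :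
    (mulRightCoset (p := p) g)^[k] C = mulRightCoset (g ^ k) C := by
  induction k with
  | zero => simp [mulRightCoset_one]
  | succ n ihn =>
    rw [Function.iterate_succ_apply', ihn, mulRightCoset_comp, ← pow_succ]

lemma mulRightCoset_ne {G : Type*} [Group G] {p : ℕ} (hp : p.Prime) {q : ℕ} (hq : q.Prime)
    (hqp : q ≠ p) {g : G} (hg : orderOf g = q) (C : ↥(pCosets p G)) :
    mulRightCoset g C ≠ C := by
  intro h
  obtain ⟨H, x, hH, hCx⟩ := C.2
  have hx : x ∈ C.1 := by
    rw [hCx]; exact ⟨1, H.one_mem, one_mul x⟩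
  have hxg : x * g ∈ C.1 := by
    have : x * g ∈ (mulRightCoset g C).1 := ⟨x, hx, rfl⟩
    rwa [h] at this
  rw [hCx] at hxg
  obtain ⟨h', hh', hhx⟩ := hxg
  -- h' * x = x * g, so g = x⁻¹ * h' * x
  have hgeq : g = x⁻¹ * h' * x := by
    have h1 : h' * x = x * g := hhx
    rw [mul_assoc, h1, ← mul_assoc, inv_mul_cancel, one_mul]
  obtain ⟨k, hk⟩ := hH ⟨h', hh'⟩
  have hk' : h' ^ (p ^ k) = 1 := by
    have := congrArg (Subtype.val) hk
    simpa using this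
  have hgpow : g ^ (p ^ k) = 1 := by
    have : (x⁻¹ * h' * x) ^ (p ^ k) = x⁻¹ * h' ^ (p ^ k) * x := by
      rw [show x⁻¹ * h' * x = x⁻¹ * h' * x⁻¹⁻¹ by rw [inv_inv], conj_pow, inv_inv]
    rw [hgeq, this, hk', mul_one, inv_mul_cancel]
  have hdvd : orderOf g ∣ p ^ k := orderOf_dvd_of_pow_eq_one hgpow
  rw [hg] at hdvd
  exact hqp ((Nat.prime_dvd_prime_iff_eq hq hp).mp (hq.dvd_of_dvd_pow hdvd))

/-- `χ(C_p(G)) = 1` if and only if `G` is a `p`-group. -/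
theorem euler_char_pCosets_eq_one_iff {G : Type*} [Group G] [Fintype G] {p : ℕ}
    (hp : p.Prime) :
    posetEulerChar ↥(pCosets p G) = 1 ↔ IsPGroup p G := by
  constructor
  · -- if χ = 1 then G is a p-group
    intro hχ
    by_contra hnp
    -- find a prime q ≠ p dividing |G|
    have hqe : ∃ q, q.Prime ∧ q ≠ p ∧ q ∣ Fintype.card G := by
      by_contra hcon
      push_neg at hcon
      refine hnp (IsPGroup.of_card (n := (Fintype.card G).primeFactorsList.length) ?_)
      rw [Nat.card_eq_fintype_card]
      exact Nat.eq_prime_pow_of_unique_prime_dvd Fintype.card_ne_zero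
        (fun {d} hd hdvd => by
          by_contra hne
          exact absurd hdvd (hcon d hd hne))
    obtain ⟨q, hq, hqp, hqdvd⟩ := hqe
    haveI : Fact q.Prime := ⟨hq⟩
    obtain ⟨g, hg⟩ := exists_prime_orderOf_dvd_card q hqdvd
    have hdvd : (q : ℤ) ∣ posetEulerChar ↥(pCosets p G) := by
      refine dvd_posetEulerChar hq (mulRightCoset g) (mulRightCoset_inj g)
        (mulRightCoset_mono g) (mulRightCoset_refl g) ?_ ?_
      · intro C
        rw [mulRightCoset_iterate, ← hg, pow_orderOf_eq_one, mulRightCoset_one]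
      · exact fun C => mulRightCoset_ne hp hq hqp hg C
    rw [hχ] at hdvd
    have : q ∣ 1 := by exact_mod_cast hdvd
    exact hq.one_lt.ne' (Nat.dvd_one.mp this)
  · -- if G is a p-group then χ = 1
    intro hG
    have hmem : (Set.univ : Set G) ∈ pCosets p G := by
      refine ⟨⊤, 1, hG.to_subgroup ⊤, ?_⟩
      ext y
      simp
    refine posetEulerChar_eq_one_of_top ⟨Set.univ, hmem⟩ ?_
    intro x
    show x.1 ⊆ Set.univ
    exact Set.subset_univ _
end

section
/- Let G be a finite group and p a prime. If G is p-closed, then χ(C_p(G)) = |G|_{p'}. -/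
section Aux

set_option linter.unusedSectionVars false

open scoped Classical

variable {G : Type*} [Group G] [Fintype G] {p : ℕ}

lemma coset_eq {H : Subgroup G} {x y : G} (hy : y ∈ (fun h => h * x) '' (H : Set G)) :
    (fun h => h * y) '' (H : Set G) = (fun h => h * x) '' (H : Set G) := by
  obtain ⟨h, hh, rfl⟩ := hy
  ext z
  constructor
  · rintro ⟨k, hk, rfl⟩
    exact ⟨k * h, H.mul_mem hk hh, by simp [mul_assoc]⟩
  · rintro ⟨k, hk, rfl⟩
    exact ⟨k * h⁻¹, H.mul_mem hk (H.inv_mem hh), by simp [mul_assoc]⟩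

lemma pCosets_nonempty {S : Set G} (hS : S ∈ pCosets p G) : S.Nonempty := by
  obtain ⟨H, x, _, rfl⟩ := hS
  exact ⟨x, 1, H.one_mem, one_mul x⟩

instance : Nonempty ↥(pCosets p G) := ⟨⟨_, ⊥, 1, IsPGroup.of_bot, rfl⟩⟩

lemma le_sylow_of_normal (hp : p.Prime) (P : Sylow p G) (hPn : (P : Subgroup G).Normal)
    {H : Subgroup G} (hH : IsPGroup p H) : H ≤ P := by
  haveI : Fact p.Prime := ⟨hp⟩
  obtain ⟨Q, hQ⟩ := hH.exists_le_sylow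
  haveI := Sylow.unique_of_normal P hPn
  rwa [Subsingleton.elim Q P] at hQ

variable (P : Sylow p G)

/-- The Sylow coset containing a given coset. -/
noncomputable def sTop (S : ↥(pCosets p G)) : ↥(pCosets p G) :=
  ⟨(fun h => h * (pCosets_nonempty S.2).some) '' (P : Subgroup G),
    ⟨P, _, P.isPGroup', rfl⟩⟩

lemma sTop_spec (hp : p.Prime) (hPn : (P : Subgroup G).Normal) (S : ↥(pCosets p G))
    {x : G} (hx : x ∈ S.1) :
    (sTop P S).1 = (fun h => h * x) '' ((P : Subgroup G) : Set G) := by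
  obtain ⟨H, x₀, hH, hS⟩ := S.2
  have hsub : S.1 ⊆ (fun h => h * x₀) '' ((P : Subgroup G) : Set G) := by
    rw [hS]
    exact Set.image_mono (le_sylow_of_normal hp P hPn hH)
  have hc := (pCosets_nonempty S.2).some_mem
  show (fun h => h * (pCosets_nonempty S.2).some) '' ((P : Subgroup G) : Set G) = _
  rw [coset_eq (hsub hc), coset_eq (hsub hx)]

lemma le_sTop (hp : p.Prime) (hPn : (P : Subgroup G).Normal) (S : ↥(pCosets p G)) :
    S ≤ sTop P S := by
  rw [← Subtype.coe_le_coe]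
  intro x hx
  rw [sTop_spec P hp hPn S hx]
  exact ⟨1, (P : Subgroup G).one_mem, one_mul x⟩

lemma sTop_eq_of_le (hp : p.Prime) (hPn : (P : Subgroup G).Normal) {S T : ↥(pCosets p G)}
    (h : S ≤ T) : sTop P S = sTop P T := by
  have hc := (pCosets_nonempty S.2).some_mem
  exact Subtype.ext ((sTop_spec P hp hPn S hc).trans (sTop_spec P hp hPn T (h hc)).symm)

lemma sTop_idem (hp : p.Prime) (hPn : (P : Subgroup G).Normal) (S : ↥(pCosets p G)) :
    sTop P (sTop P S) = sTop P S :=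
  (sTop_eq_of_le P hp hPn (le_sTop P hp hPn S)).symm

/-- The common Sylow coset over all members of a (nonempty chain) finset. -/
noncomputable def topF (s : Finset ↥(pCosets p G)) : ↥(pCosets p G) :=
  if h : s.Nonempty then sTop P h.choose else Classical.arbitrary _

lemma topF_eq (hp : p.Prime) (hPn : (P : Subgroup G).Normal) {s : Finset ↥(pCosets p G)}
    (hs : s.Nonempty) (hchain : IsChain (· ≤ ·) (s : Set ↥(pCosets p G)))
    {x : ↥(pCosets p G)} (hx : x ∈ s) : topF P s = sTop P x := by
  rw [topF, dif_pos hs]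
  have hc := hs.choose_spec
  rcases eq_or_ne hs.choose x with h | h
  · rw [h]
  · rcases hchain (Finset.mem_coe.2 hc) (Finset.mem_coe.2 hx) h with h' | h'
    · exact sTop_eq_of_le P hp hPn h'
    · exact (sTop_eq_of_le P hp hPn h').symm

lemma sTop_topF (hp : p.Prime) (hPn : (P : Subgroup G).Normal) {s : Finset ↥(pCosets p G)}
    (hs : s.Nonempty) (hchain : IsChain (· ≤ ·) (s : Set ↥(pCosets p G))) :
    sTop P (topF P s) = topF P s := by
  rw [topF_eq P hp hPn hs hchain hs.choose_spec]
  exact sTop_idem P hp hPn _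

lemma le_topF (hp : p.Prime) (hPn : (P : Subgroup G).Normal) {s : Finset ↥(pCosets p G)}
    (hchain : IsChain (· ≤ ·) (s : Set ↥(pCosets p G)))
    {x : ↥(pCosets p G)} (hx : x ∈ s) : x ≤ topF P s := by
  rw [topF_eq P hp hPn ⟨x, hx⟩ hchain hx]
  exact le_sTop P hp hPn x

lemma card_fixed (hp : p.Prime) (hPn : (P : Subgroup G).Normal) :
    Nat.card {m : ↥(pCosets p G) // sTop P m = m} = (P : Subgroup G).index := by
  rw [Subgroup.index_eq_card]
  refine Nat.card_congr (Equiv.ofBijective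
    (fun m => ((((pCosets_nonempty m.1.2).some)⁻¹ : G) : G ⧸ (P : Subgroup G))) ⟨?_, ?_⟩)
  · intro m m' h
    rw [QuotientGroup.eq, inv_inv] at h
    have h1 := sTop_spec P hp hPn m.1 (pCosets_nonempty m.1.2).some_mem
    rw [m.2] at h1
    have h2 := sTop_spec P hp hPn m'.1 (pCosets_nonempty m'.1.2).some_mem
    rw [m'.2] at h2
    have key : (fun h => h * (pCosets_nonempty m.1.2).some) '' ((P : Subgroup G) : Set G)
        = (fun h => h * (pCosets_nonempty m'.1.2).some) '' ((P : Subgroup G) : Set G) := by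
      refine coset_eq ⟨_, h, ?_⟩
      simp [mul_assoc]
    exact Subtype.ext (Subtype.ext (h1.trans (key.trans h2.symm)))
  · intro q
    obtain ⟨g, rfl⟩ := QuotientGroup.mk_surjective q
    set S : ↥(pCosets p G) :=
      ⟨(fun h => h * g⁻¹) '' ((P : Subgroup G) : Set G), ⟨P, g⁻¹, P.isPGroup', rfl⟩⟩ with hSdef
    have hgm : g⁻¹ ∈ S.1 := ⟨1, (P : Subgroup G).one_mem, one_mul g⁻¹⟩
    have hfix : sTop P S = S := Subtype.ext (sTop_spec P hp hPn S hgm)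
    refine ⟨⟨S, hfix⟩, ?_⟩
    obtain ⟨q0, hq0, hx⟩ := (pCosets_nonempty S.2).some_mem
    show (((pCosets_nonempty S.2).some)⁻¹ : G) = (g : G ⧸ (P : Subgroup G))
    rw [QuotientGroup.eq, inv_inv, ← hx]
    simp only [mul_assoc, inv_mul_cancel, mul_one]
    exact hq0

lemma index_eq (hp : p.Prime) : (P : Subgroup G).index = ordCompl[p] (Fintype.card G) := by
  haveI : Fact p.Prime := ⟨hp⟩
  have h1 := Subgroup.index_mul_card (P : Subgroup G)
  rw [Sylow.card_eq_multiplicity P, Nat.card_eq_fintype_card] at h1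
  exact (Nat.div_eq_of_eq_mul_left (pow_pos hp.pos _) h1.symm).symm

lemma erase_facts (hp : p.Prime) (hPn : (P : Subgroup G).Normal) {s : Finset ↥(pCosets p G)}
    (hs : s.Nonempty) (hchain : IsChain (· ≤ ·) (s : Set ↥(pCosets p G)))
    (hmem : topF P s ∈ s) (hne : s ≠ {topF P s}) :
    (s.erase (topF P s)).Nonempty ∧
      IsChain (· ≤ ·) ((s.erase (topF P s) : Finset _) : Set ↥(pCosets p G)) ∧
      topF P (s.erase (topF P s)) = topF P s := by
  classical
  obtain ⟨y, hy, hyne⟩ : ∃ y ∈ s, y ≠ topF P s := by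
    by_contra h
    push_neg at h
    exact hne (Finset.eq_singleton_iff_unique_mem.2 ⟨hmem, h⟩)
  have h1 : (s.erase (topF P s)).Nonempty := ⟨y, Finset.mem_erase.2 ⟨hyne, hy⟩⟩
  have h2 : IsChain (· ≤ ·) ((s.erase (topF P s) : Finset _) : Set ↥(pCosets p G)) :=
    hchain.mono (Finset.coe_subset.2 (Finset.erase_subset _ _))
  refine ⟨h1, h2, ?_⟩
  rw [topF_eq P hp hPn h1 h2 (Finset.mem_erase.2 ⟨hyne, hy⟩),
    topF_eq P hp hPn hs hchain hy]

lemma insert_facts (hp : p.Prime) (hPn : (P : Subgroup G).Normal) {s : Finset ↥(pCosets p G)}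
    (hs : s.Nonempty) (hchain : IsChain (· ≤ ·) (s : Set ↥(pCosets p G)))
    (hmem : topF P s ∉ s) :
    (insert (topF P s) s).Nonempty ∧
      IsChain (· ≤ ·) ((insert (topF P s) s : Finset _) : Set ↥(pCosets p G)) ∧
      topF P (insert (topF P s) s) = topF P s := by
  classical
  have h2 : IsChain (· ≤ ·) ((insert (topF P s) s : Finset _) : Set ↥(pCosets p G)) := by
    rw [Finset.coe_insert]
    exact hchain.insert fun b hb _ => Or.inr (le_topF P hp hPn hchain (Finset.mem_coe.1 hb))
  refine ⟨Finset.insert_nonempty _ _, h2, ?_⟩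
  rw [topF_eq P hp hPn (Finset.insert_nonempty _ _) h2 (Finset.mem_insert_self _ _)]
  exact sTop_topF P hp hPn hs hchain

lemma chain_sum_zero (hp : p.Prime) (hPn : (P : Subgroup G).Normal)
    (D : Finset (Finset ↥(pCosets p G)))
    (hD : ∀ s : Finset ↥(pCosets p G), s ∈ D ↔
      (s.Nonempty ∧ IsChain (· ≤ ·) (s : Set ↥(pCosets p G))) ∧ s ≠ {topF P s}) :
    ∑ s ∈ D, (-1 : ℤ) ^ (s.card + 1) = 0 := by
  refine Finset.sum_involution
    (fun s _ => if topF P s ∈ s then s.erase (topF P s) else insert (topF P s) s)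
    ?_ ?_ ?_ ?_
  · intro s hs
    obtain ⟨⟨hne, hch⟩, hsne⟩ := (hD s).1 hs
    by_cases h : topF P s ∈ s
    · rw [if_pos h]
      have hc : (s.erase (topF P s)).card + 1 = s.card := Finset.card_erase_add_one h
      rw [hc, ← hc]
      ring
    · rw [if_neg h, Finset.card_insert_of_notMem h]
      ring
  · intro s hs _
    by_cases h : topF P s ∈ s
    · rw [if_pos h]
      exact fun heq => (Finset.erase_eq_self.1 heq) h
    · rw [if_neg h]
      exact fun heq => h (Finset.insert_eq_self.1 heq)
  · intro s hs
    obtain ⟨⟨hne, hch⟩, hsne⟩ := (hD s).1 hs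
    by_cases h : topF P s ∈ s
    · rw [if_pos h]
      obtain ⟨h1, h2, h3⟩ := erase_facts P hp hPn hne hch h hsne
      refine (hD _).2 ⟨⟨h1, h2⟩, ?_⟩
      rw [h3]
      intro heq
      have : topF P s ∈ s.erase (topF P s) := by
        rw [heq]; exact Finset.mem_singleton_self _
      exact Finset.notMem_erase _ _ this
    · rw [if_neg h]
      obtain ⟨h1, h2, h3⟩ := insert_facts P hp hPn hne hch h
      refine (hD _).2 ⟨⟨h1, h2⟩, ?_⟩
      rw [h3]
      intro heq
      obtain ⟨y, hy⟩ := hne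
      have hyi : y ∈ insert (topF P s) s := Finset.mem_insert_of_mem hy
      rw [heq, Finset.mem_singleton] at hyi
      exact h (hyi ▸ hy)
  · intro s hs
    obtain ⟨⟨hne, hch⟩, hsne⟩ := (hD s).1 hs
    by_cases h : topF P s ∈ s
    · obtain ⟨h1, h2, h3⟩ := erase_facts P hp hPn hne hch h hsne
      rw [if_pos h, h3, if_neg (Finset.notMem_erase (topF P s) s)]
      exact Finset.insert_erase h
    · obtain ⟨h1, h2, h3⟩ := insert_facts P hp hPn hne hch h
      rw [if_neg h, h3, if_pos (Finset.mem_insert_self (topF P s) s)]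
      exact Finset.erase_insert h

lemma singleton_sum (hp : p.Prime) (hPn : (P : Subgroup G).Normal)
    [Fintype ↥(pCosets p G)] (D : Finset (Finset ↥(pCosets p G)))
    (hD : ∀ s : Finset ↥(pCosets p G), s ∈ D ↔
      (s.Nonempty ∧ IsChain (· ≤ ·) (s : Set ↥(pCosets p G))) ∧ s = {topF P s}) :
    ∑ s ∈ D, (-1 : ℤ) ^ (s.card + 1) = ((P : Subgroup G).index : ℤ) := by
  classical
  have hone : ∀ s ∈ D, (-1 : ℤ) ^ (s.card + 1) = 1 := by
    intro s hs
    rw [((hD s).1 hs).2, Finset.card_singleton]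
    norm_num
  rw [Finset.sum_congr rfl hone, Finset.sum_const, nsmul_eq_mul, mul_one]
  have hcard : D.card = (Finset.univ.filter (fun m : ↥(pCosets p G) => sTop P m = m)).card := by
    refine Finset.card_bij (fun s _ => topF P s) ?_ ?_ ?_
    · intro s hs
      obtain ⟨⟨hne, hch⟩, _⟩ := (hD s).1 hs
      rw [Finset.mem_filter]
      exact ⟨Finset.mem_univ _, sTop_topF P hp hPn hne hch⟩
    · intro a ha b hb h
      rw [((hD a).1 ha).2, ((hD b).1 hb).2, h]
    · intro m hm
      rw [Finset.mem_filter] at hm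
      have hch : IsChain (· ≤ ·) (({m} : Finset ↥(pCosets p G)) : Set ↥(pCosets p G)) := by
        rw [Finset.coe_singleton]
        exact Set.subsingleton_singleton.isChain
      have htf : topF P {m} = m := by
        rw [topF_eq P hp hPn (Finset.singleton_nonempty m) hch (Finset.mem_singleton_self m)]
        exact hm.2
      exact ⟨{m}, (hD _).2 ⟨⟨Finset.singleton_nonempty m, hch⟩, by rw [htf]⟩, htf⟩
  rw [hcard]
  congr 1
  rw [← card_fixed P hp hPn, Nat.card_eq_fintype_card, Fintype.card_subtype]

end Aux

/-- If `G` is `p`-closed (has a normal Sylow `p`-subgroup), then `χ(C_p(G)) = |G|_{p'}`. -/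
theorem euler_char_pCosets_of_pClosed {G : Type*} [Group G] [Fintype G] {p : ℕ}
    (hp : p.Prime) (hclosed : ∃ P : Sylow p G, (P : Subgroup G).Normal) :
    posetEulerChar ↥(pCosets p G) = ((ordCompl[p] (Fintype.card G) : ℕ) : ℤ) := by
  classical
  obtain ⟨P, hPn⟩ := hclosed
  rw [← index_eq P hp]
  unfold posetEulerChar
  rw [← Finset.sum_filter]
  rw [← Finset.sum_filter_add_sum_filter_not _ (fun s : Finset ↥(pCosets p G) => s = {topF P s})]
  rw [Finset.filter_filter, Finset.filter_filter]
  rw [singleton_sum P hp hPn _ (fun s => by simp [Finset.mem_filter]),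
    chain_sum_zero P hp hPn _ (fun s => by simp [Finset.mem_filter]), add_zero]
end

section
/- Let G be a finite group and p a prime. Then χ_p(G) = χ(C_p(G))/|G|_{p'} ≡ 1 (mod p). -/
/-! ### Auxiliary material for the proof (Brown's theorem) -/

namespace Brown

open scoped Classical Pointwise

/-! #### The Euler characteristic of a sub-poset of a fintype -/

lemma isChain_map_val {α : Type*} [PartialOrder α] {A : Set α} (s : Finset ↥A) :
    IsChain (· ≤ ·) (↑(s.map (Function.Embedding.subtype _)) : Set α) ↔
      IsChain (· ≤ ·) (↑s : Set ↥A) := by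
  rw [Finset.coe_map]
  constructor
  · intro h a ha b hb hab
    have := h (Set.mem_image_of_mem _ ha) (Set.mem_image_of_mem _ hb)
      (fun e => hab (Subtype.val_injective e))
    simpa using this
  · intro h a ha b hb hab
    simp only [Function.Embedding.coe_subtype, Set.mem_image] at ha hb
    obtain ⟨a', ha', rfl⟩ := ha
    obtain ⟨b', hb', rfl⟩ := hb
    have := h ha' hb' (fun e => hab (congrArg Subtype.val e))
    simpa using this

lemma posetEulerChar_set {α : Type*} [PartialOrder α] [Fintype α] (A : Set α) :
    posetEulerChar ↥A = ∑ s ∈ A.toFinset.powerset,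
      if s.Nonempty ∧ IsChain (· ≤ ·) (↑s : Set α) then (-1 : ℤ) ^ (s.card + 1) else 0 := by
  unfold posetEulerChar
  refine Finset.sum_bij' (fun s _ => s.map (Function.Embedding.subtype _))
    (fun u _ => u.subtype (· ∈ A)) ?_ ?_ ?_ ?_ ?_
  · intro s _
    simp only [Finset.mem_powerset]
    intro x hx
    simp only [Finset.mem_map, Function.Embedding.coe_subtype] at hx
    obtain ⟨a, _, rfl⟩ := hx
    simpa using a.2
  · intro u _
    simp [Finset.mem_powerset]
  · intro s _
    ext a
    simp [Finset.mem_subtype]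
  · intro u hu
    simp only [Finset.mem_powerset] at hu
    rw [Finset.subtype_map]
    refine Finset.filter_true_of_mem fun x hx => ?_
    simpa using hu hx
  · intro s _
    refine if_congr ?_ (by simp) rfl
    constructor
    · rintro ⟨hne, hch⟩
      exact ⟨by simpa [Finset.map_nonempty] using hne, (isChain_map_val s).mpr hch⟩
    · rintro ⟨hne, hch⟩
      exact ⟨by simpa [Finset.map_nonempty] using hne, (isChain_map_val s).mp hch⟩

/-! #### Right cosets -/

variable {G : Type*} [Group G]

/-- The right coset `Hx` as a set. -/
def R (H : Subgroup G) (x : G) : Set G := {y | y * x⁻¹ ∈ H}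

lemma coset_eq_R (H : Subgroup G) (x : G) : (fun h => h * x) '' (H : Set G) = R H x := by
  ext y
  constructor
  · rintro ⟨h, hh, rfl⟩; simpa [R] using hh
  · intro hy
    exact ⟨y * x⁻¹, hy, by group⟩

lemma mem_pCosets_iff {p : ℕ} {S : Set G} :
    S ∈ pCosets p G ↔ ∃ (H : Subgroup G) (x : G), IsPGroup p H ∧ S = R H x := by
  simp only [pCosets, Set.mem_setOf_eq, coset_eq_R]

lemma mem_R_self (H : Subgroup G) (x : G) : x ∈ R H x := by
  simp only [R, Set.mem_setOf_eq, mul_inv_cancel]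
  exact H.one_mem

lemma R_eq_of_mem {H : Subgroup G} {x y : G} (h : y ∈ R H x) : R H y = R H x := by
  simp only [R, Set.mem_setOf_eq] at h ⊢
  ext z
  simp only [Set.mem_setOf_eq]
  constructor
  · intro hz
    have : z * y⁻¹ * (y * x⁻¹) ∈ H := H.mul_mem hz h
    simpa [mul_assoc] using this
  · intro hz
    have : z * x⁻¹ * (y * x⁻¹)⁻¹ ∈ H := H.mul_mem hz (H.inv_mem h)
    simpa [mul_assoc] using this

lemma le_of_R_subset {H K : Subgroup G} {x y : G} (h : R H x ⊆ R K y) : H ≤ K := by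
  intro a ha
  have hx : x ∈ R K y := h (mem_R_self H x)
  have hax : a * x ∈ R H x := by simp [R, ha]
  have h2 : a * x ∈ R K y := h hax
  have : (a * x) * y⁻¹ * (x * y⁻¹)⁻¹ ∈ K := K.mul_mem h2 (K.inv_mem hx)
  simpa [mul_assoc] using this

lemma R_subset_of_le {H K : Subgroup G} (h : H ≤ K) (x : G) : R H x ⊆ R K x :=
  fun _ hz => h hz

/-- The subgroup of a coset, recovered as a stabilizer. -/
def sgp (S : Set G) : Subgroup G := MulAction.stabilizer G S

lemma smul_R (g : G) (H : Subgroup G) (x : G) :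
    g • R H x = {y : G | g⁻¹ * y * x⁻¹ ∈ H} := by
  ext y
  rw [Set.mem_smul_set_iff_inv_smul_mem]
  simp [R, mul_assoc]

lemma sgp_R (H : Subgroup G) (x : G) : sgp (R H x) = H := by
  ext g
  rw [sgp, MulAction.mem_stabilizer_iff, smul_R]
  constructor
  · intro hEq
    have hx : x ∈ ({y : G | g⁻¹ * y * x⁻¹ ∈ H} : Set G) := hEq.symm ▸ mem_R_self H x
    have : g⁻¹ ∈ H := by simpa [mul_assoc] using hx
    simpa using H.inv_mem this
  · intro hg
    ext y
    simp only [Set.mem_setOf_eq, R, mul_assoc]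
    constructor
    · intro h'
      have := H.mul_mem hg h'
      simpa [mul_assoc] using this
    · intro h'
      exact H.mul_mem (H.inv_mem hg) h'

lemma R_card (H : Subgroup G) (x : G) [Fintype G] : Nat.card (R H x) = Nat.card H := by
  rw [← coset_eq_R]
  rw [Nat.card_image_of_injective (mul_left_injective x)]
  rfl

/-! #### Chains of cosets and chains of `p`-subgroups -/

section Core

variable {p : ℕ}

lemma exists_R {S : Set G} (h : S ∈ pCosets p G) :
    ∃ x, IsPGroup p (sgp S) ∧ S = R (sgp S) x := by
  obtain ⟨H, x, hH, rfl⟩ := mem_pCosets_iff.mp h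
  exact ⟨x, by rw [sgp_R]; exact hH, by rw [sgp_R]⟩

lemma sgp_le_of_subset {S S' : Set G} (hS : S ∈ pCosets p G) (hS' : S' ∈ pCosets p G)
    (hsub : S ⊆ S') : sgp S ≤ sgp S' := by
  obtain ⟨x, _, hSx⟩ := exists_R hS
  obtain ⟨x', _, hS'x⟩ := exists_R hS'
  rw [hSx, hS'x] at hsub
  exact le_of_R_subset hsub

lemma coset_eq_of_subset_of_sgp_eq {S S' : Set G} (hS : S ∈ pCosets p G)
    (hS' : S' ∈ pCosets p G) (hsub : S ⊆ S') (heq : sgp S = sgp S') : S = S' := by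
  obtain ⟨x, _, hSx⟩ := exists_R hS
  obtain ⟨x', _, hS'x⟩ := exists_R hS'
  have hx : x ∈ S' := hsub (hSx ▸ mem_R_self _ x)
  have hx' : x ∈ R (sgp S) x' := by rw [hS'x, ← heq] at hx; exact hx
  calc S = R (sgp S) x := hSx
  _ = R (sgp S) x' := R_eq_of_mem hx'
  _ = S' := by rw [← heq] at hS'x; exact hS'x.symm

lemma chain_inf_mem {t : Finset (Subgroup G)} (hne : t.Nonempty)
    (hch : IsChain (· ≤ ·) (↑t : Set (Subgroup G))) : t.inf id ∈ t := by
  obtain ⟨m, hm, hmin⟩ := t.exists_minimal hne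
  have : t.inf id = m := by
    refine le_antisymm (Finset.inf_le hm) (Finset.le_inf fun b hb => ?_)
    rcases eq_or_ne b m with rfl | hbm
    · exact le_rfl
    · rcases hch hm hb (Ne.symm hbm) with h | h
      · exact h
      · exact absurd (le_antisymm h (by apply hmin <;> assumption)) hbm
  rw [this]; exact hm

variable [Fintype G]

/-- The nonempty chains of `p`-cosets. -/
noncomputable def X (p : ℕ) (G : Type*) [Group G] [Fintype G] : Finset (Finset (Set G)) :=
  ((pCosets p G).toFinset.powerset).filter
    (fun s => s.Nonempty ∧ IsChain (· ≤ ·) (↑s : Set (Set G)))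

/-- The nonempty chains of `p`-subgroups. -/
noncomputable def T (p : ℕ) (G : Type*) [Group G] [Fintype G] : Finset (Finset (Subgroup G)) :=
  Finset.univ.filter
    (fun t => t.Nonempty ∧ IsChain (· ≤ ·) (↑t : Set (Subgroup G)) ∧ ∀ H ∈ t, IsPGroup p H)

noncomputable def Phi (s : Finset (Set G)) : Finset (Subgroup G) := s.image sgp

noncomputable def rho (t : Finset (Subgroup G)) (g : G) : Finset (Set G) :=
  t.image (fun H => R H g)

lemma mem_X_iff {s : Finset (Set G)} :
    s ∈ X p G ↔ (∀ S ∈ s, S ∈ pCosets p G) ∧ s.Nonempty ∧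
      IsChain (· ≤ ·) (↑s : Set (Set G)) := by
  simp only [X, Finset.mem_filter, Finset.mem_powerset]
  constructor
  · rintro ⟨h1, h2⟩
    exact ⟨fun S hS => by simpa using h1 hS, h2⟩
  · rintro ⟨h1, h2⟩
    exact ⟨fun S hS => by simpa using h1 S hS, h2⟩

lemma mem_T_iff {t : Finset (Subgroup G)} :
    t ∈ T p G ↔ t.Nonempty ∧ IsChain (· ≤ ·) (↑t : Set (Subgroup G)) ∧
      ∀ H ∈ t, IsPGroup p H := by
  simp [T]

lemma sgp_injOn_chain {s : Finset (Set G)} (hs : s ∈ X p G) :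
    Set.InjOn sgp (↑s : Set (Set G)) := by
  obtain ⟨hsub, _, hch⟩ := mem_X_iff.mp hs
  intro S hS S' hS' heq
  by_contra hne
  rcases hch hS hS' hne with h | h
  · exact hne (coset_eq_of_subset_of_sgp_eq (hsub S hS) (hsub S' hS') h heq)
  · exact hne (coset_eq_of_subset_of_sgp_eq (hsub S' hS') (hsub S hS) h heq.symm).symm

lemma Phi_card {s : Finset (Set G)} (hs : s ∈ X p G) : (Phi s).card = s.card :=
  Finset.card_image_of_injOn (sgp_injOn_chain hs)

lemma Phi_mem_T {s : Finset (Set G)} (hs : s ∈ X p G) : Phi s ∈ T p G := by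
  obtain ⟨hsub, hne, hch⟩ := mem_X_iff.mp hs
  rw [mem_T_iff]
  refine ⟨hne.image _, ?_, ?_⟩
  · intro H hH K hK hHK
    simp only [Phi, Finset.coe_image, Set.mem_image, Finset.mem_coe] at hH hK
    obtain ⟨S, hS, rfl⟩ := hH
    obtain ⟨S', hS', rfl⟩ := hK
    have hne' : S ≠ S' := fun e => hHK (by rw [e])
    rcases hch hS hS' hne' with h | h
    · exact Or.inl (sgp_le_of_subset (hsub S hS) (hsub S' hS') h)
    · exact Or.inr (sgp_le_of_subset (hsub S' hS') (hsub S hS) h)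
  · intro H hH
    simp only [Phi, Finset.mem_image] at hH
    obtain ⟨S, hS, rfl⟩ := hH
    exact (exists_R (hsub S hS)).choose_spec.1

lemma rho_mem_fiber {t : Finset (Subgroup G)} (ht : t ∈ T p G) (g : G) :
    rho t g ∈ X p G ∧ Phi (rho t g) = t := by
  obtain ⟨hne, hch, hpgrp⟩ := mem_T_iff.mp ht
  have hPhi : Phi (rho t g) = t := by
    rw [Phi, rho, Finset.image_image]
    have : (sgp ∘ fun H => R H g) = id := by
      funext H; simp [Function.comp, sgp_R]
    rw [this, Finset.image_id]
  refine ⟨mem_X_iff.mpr ⟨?_, ?_, ?_⟩, hPhi⟩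
  · intro S hS
    simp only [rho, Finset.mem_image] at hS
    obtain ⟨H, hH, rfl⟩ := hS
    exact mem_pCosets_iff.mpr ⟨H, g, hpgrp H hH, rfl⟩
  · exact hne.image _
  · intro S hS S' hS' hne'
    simp only [rho, Finset.coe_image, Set.mem_image, Finset.mem_coe] at hS hS'
    obtain ⟨H, hH, rfl⟩ := hS
    obtain ⟨K, hK, rfl⟩ := hS'
    have hHK : H ≠ K := fun e => hne' (by rw [e])
    rcases hch hH hK hHK with h | h
    · exact Or.inl (R_subset_of_le h g)
    · exact Or.inr (R_subset_of_le h g)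

lemma fiber_eq_rho {t : Finset (Subgroup G)} (ht : t ∈ T p G) {s : Finset (Set G)}
    (hs : s ∈ X p G) (hPhi : Phi s = t) :
    ∃ g, g ∈ R (t.inf id) g ∧ s = rho t g ∧ R (t.inf id) g ∈ s := by
  obtain ⟨hne, hch, hpgrp⟩ := mem_T_iff.mp ht
  obtain ⟨hsub, hsne, hsch⟩ := mem_X_iff.mp hs
  set H₀ := t.inf id with hH₀
  have hH₀t : H₀ ∈ t := chain_inf_mem hne hch
  have hH₀le : ∀ K ∈ t, H₀ ≤ K := fun K hK => Finset.inf_le hK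
  have : H₀ ∈ Phi s := hPhi ▸ hH₀t
  simp only [Phi, Finset.mem_image] at this
  obtain ⟨S₀, hS₀s, hS₀⟩ := this
  obtain ⟨x, _, hS₀x⟩ := exists_R (hsub S₀ hS₀s)
  rw [hS₀] at hS₀x
  have hxS₀ : x ∈ S₀ := hS₀x ▸ mem_R_self _ x
  set g := x
  have hS₀g : S₀ = R H₀ g := hS₀x
  have key : ∀ S ∈ s, S = R (sgp S) g := by
    intro S hSs
    obtain ⟨y, _, hSy⟩ := exists_R (hsub S hSs)
    rcases eq_or_ne S S₀ with rfl | hneS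
    · rw [hS₀, hS₀g]
    · rcases hsch hSs hS₀s hneS with h | h
      · have h1 : sgp S ≤ H₀ := hS₀ ▸ sgp_le_of_subset (hsub S hSs) (hsub S₀ hS₀s) h
        have h2 : H₀ ≤ sgp S := hH₀le _ (hPhi ▸ (Finset.mem_image_of_mem sgp hSs))
        exact absurd (coset_eq_of_subset_of_sgp_eq (hsub S hSs) (hsub S₀ hS₀s) h
          ((le_antisymm h1 h2).trans hS₀.symm)) hneS
      · have hgS : g ∈ S := h (hS₀g ▸ mem_R_self H₀ g)
        have hgS' : g ∈ R (sgp S) y := by rw [← hSy]; exact hgS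
        exact hSy.trans (R_eq_of_mem hgS').symm
  have hsubset : s ⊆ rho t g := by
    intro S hSs
    rw [rho, Finset.mem_image]
    exact ⟨sgp S, hPhi ▸ Finset.mem_image_of_mem sgp hSs, (key S hSs).symm⟩
  have hcard : (rho t g).card ≤ s.card := by
    rw [rho]
    calc (t.image (fun H => R H g)).card ≤ t.card := Finset.card_image_le
    _ = (Phi s).card := by rw [hPhi]
    _ = s.card := Phi_card hs
  have hseq : s = rho t g := Finset.eq_of_subset_of_card_le hsubset hcard
  exact ⟨g, mem_R_self _ _, hseq, hS₀g ▸ hS₀s⟩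

lemma rho_eq_rho_iff {t : Finset (Subgroup G)} (ht : t ∈ T p G) {g g' : G} :
    rho t g' = rho t g ↔ g' ∈ R (t.inf id) g := by
  obtain ⟨hne, hch, _⟩ := mem_T_iff.mp ht
  set H₀ := t.inf id with hH₀
  have hH₀t : H₀ ∈ t := chain_inf_mem hne hch
  constructor
  · intro h
    have : R H₀ g' ∈ rho t g := h ▸ Finset.mem_image_of_mem _ hH₀t
    simp only [rho, Finset.mem_image] at this
    obtain ⟨K, hK, hKeq⟩ := this
    have : K = H₀ := by
      have := congrArg sgp hKeq
      rwa [sgp_R, sgp_R] at this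
    rw [this] at hKeq
    exact hKeq ▸ mem_R_self H₀ g'
  · intro h
    refine Finset.image_congr fun K hK => ?_
    have : g' ∈ R K g := R_subset_of_le (Finset.inf_le hK) g h
    exact R_eq_of_mem this

lemma fiber_card {t : Finset (Subgroup G)} (ht : t ∈ T p G) :
    ((X p G).filter (fun s => Phi s = t)).card = (t.inf id).index := by
  set H₀ := t.inf id with hH₀
  set F := (X p G).filter (fun s => Phi s = t) with hF
  have hmaps : ∀ g ∈ (Finset.univ : Finset G), rho t g ∈ F := by
    intro g _
    obtain ⟨h1, h2⟩ := rho_mem_fiber ht g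
    exact Finset.mem_filter.mpr ⟨h1, h2⟩
  have hcards := Finset.card_eq_sum_card_fiberwise hmaps
  have hinner : ∀ s ∈ F, ((Finset.univ : Finset G).filter (fun g => rho t g = s)).card
      = Nat.card H₀ := by
    intro s hs
    obtain ⟨hsX, hPhi⟩ := Finset.mem_filter.mp hs
    obtain ⟨g, hg, hseq, _⟩ := fiber_eq_rho ht hsX hPhi
    have : ∀ g' : G, (rho t g' = s) ↔ g' ∈ R H₀ g := by
      intro g'
      rw [hseq]
      exact rho_eq_rho_iff ht
    rw [Finset.filter_congr (fun g' _ => by rw [this g'])]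
    rw [← R_card H₀ g, Nat.card_eq_fintype_card, Fintype.card_subtype]
  rw [Finset.sum_congr rfl hinner, Finset.sum_const, smul_eq_mul] at hcards
  have hidx : H₀.index * Nat.card H₀ = Fintype.card G := by
    rw [Subgroup.index_mul_card, Nat.card_eq_fintype_card]
  have hpos : 0 < Nat.card H₀ := Nat.card_pos
  rw [Finset.card_univ] at hcards
  exact Nat.eq_of_mul_eq_mul_right hpos (by rw [← hcards, hidx])

lemma stepB :
    ∑ s ∈ X p G, (-1 : ℤ) ^ (s.card + 1)
      = ∑ t ∈ T p G, (-1 : ℤ) ^ (t.card + 1) * ((t.inf id).index : ℤ) := by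
  rw [← Finset.sum_fiberwise_of_maps_to (g := Phi) (fun s hs => Phi_mem_T hs)
    (f := fun s => (-1 : ℤ) ^ (s.card + 1))]
  refine Finset.sum_congr rfl fun t ht => ?_
  have h1 : ∀ s ∈ (X p G).filter (fun s => Phi s = t),
      (-1 : ℤ) ^ (s.card + 1) = (-1 : ℤ) ^ (t.card + 1) := by
    intro s hs
    obtain ⟨hsX, hPhi⟩ := Finset.mem_filter.mp hs
    rw [← hPhi, Phi_card hsX]
  rw [Finset.sum_congr rfl h1, Finset.sum_const, fiber_card ht, nsmul_eq_mul, mul_comm]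

end Core

/-! #### Arithmetic of `p`-subgroups -/

section Arith

variable [Fintype G] {p : ℕ}

/-- The exponent of the order of a finite `p`-group. -/
noncomputable def e (p : ℕ) {G : Type*} [Group G] (H : Subgroup G) : ℕ :=
  (Nat.card H).factorization p

lemma card_eq_pow_e (hp : p.Prime) {H : Subgroup G} (hH : IsPGroup p H) :
    Nat.card H = p ^ e p H := by
  haveI : Fact p.Prime := ⟨hp⟩
  obtain ⟨k, hk⟩ := IsPGroup.iff_card.mp hH
  rw [hk, e, hk, hp.factorization_pow, Finsupp.single_eq_same]

lemma e_le_n (hp : p.Prime) {H : Subgroup G} (hH : IsPGroup p H) :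
    e p H ≤ (Fintype.card G).factorization p := by
  have hdvd : p ^ e p H ∣ Fintype.card G := by
    rw [← card_eq_pow_e hp hH, ← Nat.card_eq_fintype_card]
    exact Subgroup.card_subgroup_dvd_card H
  exact (Nat.Prime.pow_dvd_iff_le_factorization hp Fintype.card_ne_zero).mp hdvd

lemma index_eq (hp : p.Prime) {H : Subgroup G} (hH : IsPGroup p H) :
    H.index = ordCompl[p] (Fintype.card G)
      * p ^ ((Fintype.card G).factorization p - e p H) := by
  have h1 : H.index * p ^ e p H = Fintype.card G := by
    rw [← card_eq_pow_e hp hH, Subgroup.index_mul_card, Nat.card_eq_fintype_card]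
  have h2 : ordCompl[p] (Fintype.card G) * p ^ ((Fintype.card G).factorization p - e p H)
      * p ^ e p H = Fintype.card G := by
    rw [mul_assoc, ← pow_add, Nat.sub_add_cancel (e_le_n hp hH), mul_comm]
    exact Nat.ordProj_mul_ordCompl_eq_self (Fintype.card G) p
  exact Nat.eq_of_mul_eq_mul_right (pow_pos hp.pos _) (h1.trans h2.symm)

lemma eq_of_le_of_sylow (hp : p.Prime) {H K : Subgroup G} (hH : IsPGroup p H)
    (hK : IsPGroup p K) (hle : H ≤ K)
    (hen : e p H = (Fintype.card G).factorization p) : H = K :=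
  Subgroup.eq_of_le_of_card_ge hle (by
    rw [card_eq_pow_e hp hH, card_eq_pow_e hp hK, hen]
    exact Nat.pow_le_pow_right hp.pos (e_le_n hp hK))

lemma card_sylow_zmod (hp : p.Prime) :
    ((Fintype.card (Sylow p G) : ℕ) : ZMod p) = 1 := by
  haveI : Fact p.Prime := ⟨hp⟩
  have := card_sylow_modEq_one p G
  have h := (ZMod.natCast_eq_natCast_iff _ _ _).mpr this
  simpa using h

lemma inf_pGroup {t : Finset (Subgroup G)} (ht : t ∈ T p G) :
    IsPGroup p (t.inf id : Subgroup G) := by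
  obtain ⟨hne, hch, hp'⟩ := mem_T_iff.mp ht
  exact hp' _ (chain_inf_mem hne hch)

lemma T1_singleton (hp : p.Prime) {t : Finset (Subgroup G)} (ht : t ∈ T p G)
    (hen : e p (t.inf id) = (Fintype.card G).factorization p) : t = {t.inf id} := by
  obtain ⟨hne, hch, hp'⟩ := mem_T_iff.mp ht
  have hmem : t.inf id ∈ t := chain_inf_mem hne hch
  refine (Finset.eq_singleton_iff_unique_mem).mpr ⟨hmem, fun K hK => ?_⟩
  exact (eq_of_le_of_sylow hp (inf_pGroup ht) (hp' K hK) (Finset.inf_le hK) hen).symm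

lemma card_T1 (hp : p.Prime) :
    ((T p G).filter (fun t => e p (t.inf id) = (Fintype.card G).factorization p)).card
      = Fintype.card (Sylow p G) := by
  haveI : Fact p.Prime := ⟨hp⟩
  have hbij : (Finset.univ : Finset (Sylow p G)).card
      = ((T p G).filter (fun t => e p (t.inf id) = (Fintype.card G).factorization p)).card := by
    refine Finset.card_bij (fun (P : Sylow p G) _ => ({(P : Subgroup G)} : Finset (Subgroup G)))
      ?_ ?_ ?_
    · intro P _
      have hT : ({(P : Subgroup G)} : Finset (Subgroup G)) ∈ T p G := by
        rw [mem_T_iff]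
        refine ⟨Finset.singleton_nonempty _, by simp, fun H hH => ?_⟩
        rw [Finset.mem_singleton] at hH
        rw [hH]
        exact P.isPGroup'
      refine Finset.mem_filter.mpr ⟨hT, ?_⟩
      rw [Finset.inf_singleton]
      show e p (P : Subgroup G) = _
      rw [e, Sylow.card_eq_multiplicity P, hp.factorization_pow, Finsupp.single_eq_same,
        Nat.card_eq_fintype_card]
    · intro P _ Q _ h
      exact Sylow.ext (Finset.singleton_inj.mp h)
    · intro t htmem
      obtain ⟨ht, hen⟩ := Finset.mem_filter.mp htmem
      have hcard : Nat.card (t.inf id : Subgroup G) = p ^ (Nat.card G).factorization p := by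
        rw [card_eq_pow_e hp (inf_pGroup ht), hen, Nat.card_eq_fintype_card]
      refine ⟨Sylow.ofCard (t.inf id) hcard, Finset.mem_univ _, ?_⟩
      show ({((Sylow.ofCard (t.inf id) hcard : Sylow p G) : Subgroup G)} : Finset (Subgroup G)) = t
      rw [Sylow.coe_ofCard]
      exact (T1_singleton hp ht hen).symm
  rw [← hbij, Finset.card_univ]

end Arith

/-- Main result, in the classical scope. -/
theorem main {G : Type*} [Group G] [Fintype G]
    {p : ℕ} (hp : p.Prime) :
    ∃ χp : ℤ,
      posetEulerChar ↥(pCosets p G) = ((ordCompl[p] (Fintype.card G) : ℕ) : ℤ) * χp ∧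
      χp ≡ 1 [ZMOD (p : ℤ)] := by
  set n := (Fintype.card G).factorization p with hn
  set m := ordCompl[p] (Fintype.card G) with hm
  refine ⟨∑ t ∈ Brown.T p G, (-1 : ℤ) ^ (t.card + 1) * (p : ℤ) ^ (n - Brown.e p (t.inf id)),
    ?_, ?_⟩
  · rw [Brown.posetEulerChar_set (pCosets p G), ← Finset.sum_filter]
    have h := Brown.stepB (p := p) (G := G)
    rw [Brown.X] at h
    rw [h, Finset.mul_sum]
    refine Finset.sum_congr rfl fun t ht => ?_
    rw [Brown.index_eq hp (Brown.inf_pGroup ht), Nat.cast_mul, Nat.cast_pow]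
    ring
  · rw [← ZMod.intCast_eq_intCast_iff]
    push_cast
    have hsplit : ∀ t ∈ Brown.T p G,
        ((-1 : ZMod p) ^ (t.card + 1) * (p : ZMod p) ^ (n - Brown.e p (t.inf id)))
          = if Brown.e p (t.inf id) = n then 1 else 0 := by
      intro t ht
      by_cases hcase : Brown.e p (t.inf id) = n
      · rw [if_pos hcase, hcase, Nat.sub_self, pow_zero, mul_one]
        have := Brown.T1_singleton hp ht hcase
        rw [this, Finset.card_singleton]
        norm_num
      · rw [if_neg hcase]
        have hlt : Brown.e p (t.inf id) < n := lt_of_le_of_ne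
          (Brown.e_le_n hp (Brown.inf_pGroup ht)) hcase
        rw [ZMod.natCast_self, zero_pow (Nat.sub_ne_zero_of_lt hlt), mul_zero]
    rw [Finset.sum_congr rfl hsplit, Finset.sum_boole]
    rw [Brown.card_T1 hp, Brown.card_sylow_zmod hp]

end Brown

/-- For every finite group `G` and prime `p`, `χ_p(G) = χ(C_p(G))/|G|_{p'} ≡ 1 (mod p)`. -/
theorem euler_char_pCosets_div_ordCompl_modEq_one {G : Type*} [Group G] [Fintype G]
    {p : ℕ} (hp : p.Prime) :
    ∃ χp : ℤ,
      posetEulerChar ↥(pCosets p G) = ((ordCompl[p] (Fintype.card G) : ℕ) : ℤ) * χp ∧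
      χp ≡ 1 [ZMOD (p : ℤ)] :=
  Brown.main hp
end

section
/- Let G be a finite group, p a prime, and N a normal p-subgroup of G. Then χ(C_p(G)) = χ(C_p(G/N)). -/
open scoped Classical Pointwise

lemma posetEulerChar_def (P : Type*) [PartialOrder P] [Fintype P] :
    posetEulerChar P = ∑ s ∈ (Finset.univ : Finset P).powerset,
      if s.Nonempty ∧ IsChain (· ≤ ·) (s : Set P) then (-1 : ℤ) ^ (s.card + 1) else 0 := by
  unfold posetEulerChar
  congr!

lemma posetEulerChar_congr {P Q : Type*} [PartialOrder P] [PartialOrder Q] [Fintype P]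
    [Fintype Q] (e : P ≃o Q) : posetEulerChar P = posetEulerChar Q := by
  rw [posetEulerChar_def, posetEulerChar_def]
  refine Finset.sum_nbij' (fun s => s.map e.toEquiv.toEmbedding)
    (fun t => t.map e.symm.toEquiv.toEmbedding) (by simp) (by simp)
    (fun s _ => by simp [Finset.map_map]; ext x; simp) (fun t _ => by ext x; simp)
    (fun s _ => ?_)
  have hiff : (s.map e.toEquiv.toEmbedding).Nonempty ∧
      IsChain (· ≤ ·) ((s.map e.toEquiv.toEmbedding : Finset Q) : Set Q) ↔
      s.Nonempty ∧ IsChain (· ≤ ·) (s : Set P) := by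
    rw [Finset.coe_map]
    constructor
    · rintro ⟨h1, h2⟩
      refine ⟨by simpa using h1, ?_⟩
      intro a ha b hb hab
      rcases h2 (Set.mem_image_of_mem _ ha) (Set.mem_image_of_mem _ hb)
        (fun h => hab (e.injective h)) with h | h
      · exact Or.inl (e.le_iff_le.mp h)
      · exact Or.inr (e.le_iff_le.mp h)
    · rintro ⟨h1, h2⟩
      refine ⟨by simpa using h1, ?_⟩
      rintro _ ⟨a, ha, rfl⟩ _ ⟨b, hb, rfl⟩ hab
      rcases h2 ha hb (fun h => hab (congrArg _ h)) with h | h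
      · exact Or.inl (e.le_iff_le.mpr h)
      · exact Or.inr (e.le_iff_le.mpr h)
  rw [Finset.card_map]
  by_cases h : s.Nonempty ∧ IsChain (· ≤ ·) (s : Set P)
  · rw [if_pos h, if_pos (hiff.mpr h)]
  · rw [if_neg h, if_neg (fun hc => h (hiff.mp hc))]

lemma isChain_val_image {P : Type*} [Preorder P] (p : P → Prop) (t : Set {y // p y}) :
    IsChain (· ≤ ·) (Subtype.val '' t) ↔ IsChain (· ≤ ·) t := by
  constructor
  · intro h a ha b hb hab
    rcases h (Set.mem_image_of_mem _ ha) (Set.mem_image_of_mem _ hb)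
      (fun hh => hab (Subtype.coe_injective hh)) with hh | hh
    · exact Or.inl hh
    · exact Or.inr hh
  · rintro h _ ⟨a, ha, rfl⟩ _ ⟨b, hb, rfl⟩ hab
    rcases h ha hb (fun hh => hab (congrArg _ hh)) with hh | hh
    · exact Or.inl hh
    · exact Or.inr hh

lemma posetEulerChar_erase {P : Type*} [PartialOrder P] [Fintype P] {x m : P}
    (hxm : x < m) (hm : ∀ y, x < y → m ≤ y) :
    posetEulerChar P = posetEulerChar {y : P // y ≠ x} := by
  have hmx : m ≠ x := fun h => absurd (h ▸ hxm) (lt_irrefl x)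
  rw [posetEulerChar_def, posetEulerChar_def]
  rw [← Finset.sum_filter_add_sum_filter_not Finset.univ.powerset (fun s => x ∈ s)]
  -- the chains through `x` cancel in pairs via `s ↦ s Δ {m}`
  have key : ∀ s : Finset P, x ∈ s → m ∉ s →
      ((insert m s).Nonempty ∧ IsChain (· ≤ ·) ((insert m s : Finset P) : Set P) ↔
        s.Nonempty ∧ IsChain (· ≤ ·) (s : Set P)) := by
    intro s hx _
    constructor
    · rintro ⟨-, h2⟩
      exact ⟨⟨x, hx⟩, h2.mono (by rw [Finset.coe_insert]; exact Set.subset_insert _ _)⟩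
    · rintro ⟨-, h2⟩
      rw [Finset.coe_insert]
      refine ⟨Finset.insert_nonempty _ _, h2.insert ?_⟩
      intro b hb hbm
      rcases eq_or_ne b x with rfl | hbx
      · exact Or.inr hxm.le
      rcases h2 (by exact_mod_cast hx) hb hbx.symm with hh | hh
      · exact Or.inl (hm b (lt_of_le_of_ne hh (Ne.symm hbx)))
      · exact Or.inr (hh.trans hxm.le)
  have h1 : (∑ s ∈ Finset.univ.powerset.filter (fun s : Finset P => x ∈ s),
      if s.Nonempty ∧ IsChain (· ≤ ·) (s : Set P) then (-1 : ℤ) ^ (s.card + 1) else 0) = 0 := by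
    refine Finset.sum_involution
      (fun s _ => if m ∈ s then s.erase m else insert m s) ?_ ?_ ?_ ?_
    · intro s hs
      simp only [Finset.mem_filter] at hs
      obtain ⟨-, hx⟩ := hs
      by_cases hms : m ∈ s
      · rw [if_pos hms]
        have hs' : s = insert m (s.erase m) := (Finset.insert_erase hms).symm
        have hxe : x ∈ s.erase m := Finset.mem_erase.mpr ⟨fun h => hmx h.symm, hx⟩
        have hiff := key (s.erase m) hxe (Finset.notMem_erase m s)
        rw [← hs'] at hiff
        by_cases hc : s.Nonempty ∧ IsChain (· ≤ ·) (s : Set P)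
        · rw [if_pos hc, if_pos (hiff.mp hc)]
          rw [← Finset.card_erase_add_one hms, pow_succ]
          ring
        · rw [if_neg hc, if_neg (fun h => hc (hiff.mpr h)), add_zero]
      · rw [if_neg hms]
        have hiff := key s hx hms
        by_cases hc : s.Nonempty ∧ IsChain (· ≤ ·) (s : Set P)
        · rw [if_pos hc, if_pos (hiff.mpr hc),
            Finset.card_insert_of_notMem hms, pow_succ]
          ring
        · rw [if_neg hc, if_neg (fun h => hc (hiff.mp h)), add_zero]
    · intro s hs _
      by_cases hms : m ∈ s
      · rw [if_pos hms]
        exact fun h => (Finset.erase_eq_self.mp h) hms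
      · rw [if_neg hms]
        exact fun h => hms (Finset.insert_eq_self.mp h)
    · intro s hs
      simp only [Finset.mem_filter] at hs ⊢
      obtain ⟨-, hx⟩ := hs
      by_cases hms : m ∈ s
      · rw [if_pos hms]
        exact ⟨Finset.mem_powerset.mpr (Finset.subset_univ _),
          Finset.mem_erase.mpr ⟨fun h => hmx h.symm, hx⟩⟩
      · rw [if_neg hms]
        exact ⟨Finset.mem_powerset.mpr (Finset.subset_univ _), Finset.mem_insert_of_mem hx⟩
    · intro s hs
      by_cases hms : m ∈ s
      · rw [if_pos hms, if_neg (Finset.notMem_erase m s), Finset.insert_erase hms]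
      · rw [if_neg hms, if_pos (Finset.mem_insert_self m s), Finset.erase_insert hms]
  rw [h1, zero_add]
  -- chains avoiding `x` correspond to chains of the subtype
  refine Finset.sum_nbij' (fun s => s.subtype (· ≠ x))
    (fun t => t.map (Function.Embedding.subtype (· ≠ x))) ?_ ?_ ?_ ?_ ?_
  · intro s _
    exact Finset.mem_powerset.mpr (Finset.subset_univ _)
  · intro t _
    simp only [Finset.mem_filter]
    refine ⟨Finset.mem_powerset.mpr (Finset.subset_univ _), ?_⟩
    simp only [Finset.mem_map, Function.Embedding.coe_subtype]
    rintro ⟨⟨a, ha⟩, -, h⟩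
    exact ha h
  · intro s hs
    simp only [Finset.mem_filter] at hs
    obtain ⟨-, hx⟩ := hs
    ext a
    simp only [Finset.mem_map, Finset.mem_subtype, Function.Embedding.coe_subtype]
    constructor
    · rintro ⟨⟨b, hb⟩, h1, rfl⟩
      exact h1
    · intro ha
      exact ⟨⟨a, fun h => hx (h ▸ ha)⟩, ha, rfl⟩
  · intro t _
    ext ⟨a, ha⟩
    simp only [Finset.mem_subtype, Finset.mem_map, Function.Embedding.coe_subtype]
    constructor
    · rintro ⟨⟨b, hb⟩, h1, (h2 : b = a)⟩
      subst h2
      exact h1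
    · intro h
      exact ⟨⟨a, ha⟩, h, rfl⟩
  · intro s hs
    simp only [Finset.mem_filter] at hs
    obtain ⟨-, hx⟩ := hs
    have hmap : (s.subtype (· ≠ x)).map (Function.Embedding.subtype (· ≠ x)) = s := by
      ext a
      simp only [Finset.mem_map, Finset.mem_subtype, Function.Embedding.coe_subtype]
      constructor
      · rintro ⟨⟨b, hb⟩, h1, rfl⟩
        exact h1
      · intro ha
        exact ⟨⟨a, fun h => hx (h ▸ ha)⟩, ha, rfl⟩
    conv_lhs => rw [← hmap]
    rw [Finset.card_map, Finset.coe_map, Function.Embedding.coe_subtype, isChain_val_image]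
    congr 1
    simp only [eq_iff_iff, and_congr_left_iff]
    intro
    constructor
    · rintro ⟨a, ha⟩
      simp only [Finset.mem_map] at ha
      obtain ⟨b, hb, -⟩ := ha
      exact ⟨b, hb⟩
    · rintro ⟨a, ha⟩
      exact ⟨_, Finset.mem_map_of_mem _ ha⟩

universe u

lemma posetEulerChar_closure_aux : ∀ (n : ℕ) (P : Type u) [PartialOrder P] [Fintype P],
    Fintype.card P = n → ∀ c : P → P, Monotone c → (∀ y, y ≤ c y) → (∀ y, c (c y) = c y) →
    posetEulerChar P = posetEulerChar {y : P // c y = y} := by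
  intro n
  induction n using Nat.strong_induction_on with
  | _ n ih =>
    intro P _ _ hcard c hmono hle hidem
    by_cases hall : ∀ y : P, c y = y
    · refine posetEulerChar_congr (OrderIso.symm ⟨Equiv.subtypeUnivEquiv hall, Iff.rfl⟩)
    · push_neg at hall
      obtain ⟨x0, hx0⟩ := hall
      obtain ⟨x, hx, hmax⟩ := Set.Finite.exists_maximalFor id {y : P | c y ≠ y}
        (Set.toFinite _) ⟨x0, hx0⟩
      simp only [Set.mem_setOf_eq, id] at hx hmax
      have hxm : x < c x := lt_of_le_of_ne (hle x) (Ne.symm hx)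
      have hmin : ∀ y, x < y → c x ≤ y := by
        intro y hy
        have hyc : c y = y := by
          by_contra h
          exact hy.ne (le_antisymm hy.le (hmax h hy.le))
        calc c x ≤ c y := hmono hy.le
          _ = y := hyc
      have e1 := posetEulerChar_erase hxm hmin
      set Q := {y : P // y ≠ x} with hQ
      have hne : ∀ y : P, c (c y) = c y → c y ≠ x := by
        intro y hcy h
        exact hx (h ▸ hcy)
      let c' : Q → Q := fun y => ⟨c y.val, hne y.val (hidem y.val)⟩
      have hcard' : Fintype.card Q < n := by
        rw [← hcard]
        exact Fintype.card_subtype_lt (x := x) (by simp)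
      have e2 := ih _ hcard' Q rfl c'
        (fun a b hab => by exact hmono (Subtype.coe_le_coe.mpr hab))
        (fun y => by exact hle y.val)
        (fun y => Subtype.ext (hidem y.val))
      have e3 : {y : Q // c' y = y} ≃o {y : P // c y = y} := by
        refine ⟨⟨fun y => ⟨y.val.val, congrArg Subtype.val y.prop⟩,
          fun y => ⟨⟨y.val, fun h => hx (h ▸ y.prop)⟩,
            Subtype.ext y.prop⟩, fun y => rfl, fun y => rfl⟩, Iff.rfl⟩
      rw [e1, e2, posetEulerChar_congr e3]

lemma posetEulerChar_closure {P : Type u} [PartialOrder P] [Fintype P] (c : P → P)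
    (hmono : Monotone c) (hle : ∀ y, y ≤ c y) (hidem : ∀ y, c (c y) = c y) :
    posetEulerChar P = posetEulerChar {y : P // c y = y} :=
  posetEulerChar_closure_aux _ P rfl c hmono hle hidem

section Grp

variable {G : Type*} [Group G] {p : ℕ} (N : Subgroup G) [hN_norm : N.Normal]

lemma coset_eq_mul_singleton (H : Subgroup G) (x : G) :
    (fun h => h * x) '' (H : Set G) = (H : Set G) * {x} :=
  (Set.mul_singleton).symm

lemma nmul_mem_pCosets (hN : IsPGroup p N) {S : Set G} (hS : S ∈ pCosets p G) :
    (N : Set G) * S ∈ pCosets p G := by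
  obtain ⟨H, x, hH, rfl⟩ := hS
  refine ⟨N ⊔ H, x, IsPGroup.to_sup_of_normal_left hN hH, ?_⟩
  rw [coset_eq_mul_singleton, coset_eq_mul_singleton, Subgroup.normal_mul, mul_assoc]

lemma subset_nmul (S : Set G) : S ⊆ (N : Set G) * S := by
  intro y hy
  have := Set.mul_mem_mul (show (1 : G) ∈ (N : Set G) from N.one_mem) hy
  rwa [one_mul] at this

lemma nmul_nmul (S : Set G) : (N : Set G) * ((N : Set G) * S) = (N : Set G) * S := by
  rw [← mul_assoc]
  congr 1
  rw [← Subgroup.normal_mul, sup_idem]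

lemma preimage_image_of_closed {S : Set G} (hS : (N : Set G) * S = S) :
    (QuotientGroup.mk' N) ⁻¹' ((QuotientGroup.mk' N) '' S) = S := by
  apply Set.Subset.antisymm _ (Set.subset_preimage_image _ _)
  rintro y hy
  obtain ⟨s, hs, hsy⟩ := hy
  have : (s : G)⁻¹ * y ∈ N := by
    rw [← QuotientGroup.eq]
    exact_mod_cast hsy
  -- y = s * (s⁻¹ y) = (s (s⁻¹ y) s⁻¹) * s ∈ N * S
  have hy' : y ∈ (N : Set G) * S := by
    refine ⟨s * (s⁻¹ * y) * s⁻¹, hN_norm.conj_mem _ this s, s, hs, ?_⟩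
    group
  rwa [hS] at hy'

lemma image_mem_pCosets {S : Set G} (hS : S ∈ pCosets p G) :
    (QuotientGroup.mk' N) '' S ∈ pCosets p (G ⧸ N) := by
  obtain ⟨H, x, hH, rfl⟩ := hS
  refine ⟨H.map (QuotientGroup.mk' N), QuotientGroup.mk' N x, hH.map _, ?_⟩
  rw [Subgroup.coe_map, ← Set.image_comp, ← Set.image_comp]
  apply Set.image_congr
  intro h _
  simp [Function.comp]

end Grp

section Grp2

variable {G : Type*} [Group G] {p : ℕ} (N : Subgroup G) [hN_norm : N.Normal]

lemma exists_closed_preimage (hN : IsPGroup p N) {T : Set (G ⧸ N)}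
    (hT : T ∈ pCosets p (G ⧸ N)) :
    ∃ S ∈ pCosets p G, (N : Set G) * S = S ∧ (QuotientGroup.mk' N) '' S = T := by
  obtain ⟨K, t, hK, rfl⟩ := hT
  obtain ⟨x, rfl⟩ := QuotientGroup.mk'_surjective N t
  refine ⟨(fun h => h * x) '' ((K.comap (QuotientGroup.mk' N) : Subgroup G) : Set G),
    ⟨_, x, hK.comap_of_ker_isPGroup _ (by rwa [QuotientGroup.ker_mk']), rfl⟩, ?_, ?_⟩
  · have hNH : N ≤ K.comap (QuotientGroup.mk' N) := by
      intro n hn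
      simp only [Subgroup.mem_comap, QuotientGroup.mk'_apply]
      rw [QuotientGroup.eq_one_iff n |>.mpr hn]
      exact K.one_mem
    rw [coset_eq_mul_singleton, ← mul_assoc, ← Subgroup.normal_mul, sup_eq_right.mpr hNH]
  · have himg : (QuotientGroup.mk' N) '' ((fun h => h * x) ''
        ((K.comap (QuotientGroup.mk' N) : Subgroup G) : Set G)) =
        (fun k => k * (QuotientGroup.mk' N x)) '' ((QuotientGroup.mk' N) ''
          ((K.comap (QuotientGroup.mk' N) : Subgroup G) : Set G)) := by
      rw [← Set.image_comp, ← Set.image_comp]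
      apply Set.image_congr
      intro h _
      simp [Function.comp]
    rw [himg, ← Subgroup.coe_map,
      Subgroup.map_comap_eq_self_of_surjective (QuotientGroup.mk'_surjective N)]

end Grp2

/-- If `N` is a normal `p`-subgroup of `G`, then `χ(C_p(G)) = χ(C_p(G/N))`. -/
theorem euler_char_pCosets_quotient_normal_pSubgroup {G : Type*} [Group G] [Fintype G]
    {p : ℕ} (hp : p.Prime) (N : Subgroup G) (hN_norm : N.Normal) (hN : IsPGroup p N) :
    posetEulerChar ↥(pCosets p G) = posetEulerChar ↥(pCosets p (G ⧸ N)) := by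
  classical
  haveI := hN_norm
  haveI : Fintype ↥(pCosets p G) := Fintype.ofFinite _
  haveI : Fintype ↥(pCosets p (G ⧸ N)) := Fintype.ofFinite _
  set π := QuotientGroup.mk' N with hπ
  let c : ↥(pCosets p G) → ↥(pCosets p G) :=
    fun S => ⟨(N : Set G) * S.val, nmul_mem_pCosets N hN S.prop⟩
  have hmono : Monotone c := by
    intro a b hab
    exact Set.mul_subset_mul_left hab
  have hle : ∀ S, S ≤ c S := fun S => subset_nmul N S.val
  have hidem : ∀ S, c (c S) = c S := fun S => Subtype.ext (nmul_nmul N S.val)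
  rw [posetEulerChar_closure c hmono hle hidem]
  haveI : Fintype {y : ↥(pCosets p G) // c y = y} := Fintype.ofFinite _
  refine posetEulerChar_congr ?_
  have hclosed : ∀ S : {y : ↥(pCosets p G) // c y = y}, (N : Set G) * S.val.val = S.val.val :=
    fun S => congrArg Subtype.val S.prop
  let f : {y : ↥(pCosets p G) // c y = y} → ↥(pCosets p (G ⧸ N)) :=
    fun S => ⟨π '' S.val.val, image_mem_pCosets N S.val.prop⟩
  have hpre : ∀ S : {y : ↥(pCosets p G) // c y = y}, π ⁻¹' (π '' S.val.val) = S.val.val :=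
    fun S => preimage_image_of_closed N (hclosed S)
  have hinj : Function.Injective f := by
    intro a b hab
    have h1 : π '' a.val.val = π '' b.val.val := congrArg Subtype.val hab
    have h2 : a.val.val = b.val.val := by
      rw [← hpre a, ← hpre b, h1]
    exact Subtype.ext (Subtype.ext h2)
  have hsurj : Function.Surjective f := by
    rintro ⟨T, hT⟩
    obtain ⟨S, hS, hSc, hST⟩ := exists_closed_preimage N hN hT
    exact ⟨⟨⟨S, hS⟩, Subtype.ext hSc⟩, Subtype.ext hST⟩
  have hrel : ∀ a b : {y : ↥(pCosets p G) // c y = y}, f a ≤ f b ↔ a ≤ b := by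
    intro a b
    constructor
    · intro hab
      have h1 : π '' a.val.val ⊆ π '' b.val.val := hab
      have h2 : a.val.val ⊆ b.val.val := by
        rw [← hpre a, ← hpre b]
        exact Set.preimage_mono h1
      exact h2
    · intro hab
      exact Set.image_mono hab
  exact ⟨Equiv.ofBijective f ⟨hinj, hsurj⟩, hrel _ _⟩
end
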